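/- arXiv:1601.03258 — 8 statements merged into one kernel-verified Lean document; each statement's English description precedes it below -/
import Mathlib

section
/- Let q : ℝ → ℂ be continuous with ∫_ℝ (1+|x|)|q(x)| dx < ∞, and let k be a nonzero real number. Then there exists a unique bounded continuous function f : ℝ → ℂ satisfying the Volterra integral equation f(x) = e^{ikx} − ∫_x^∞ (sin(k(x−t))/k) · q(t) · f(t) dt for all x ∈ ℝ (the right Jost solution f₊(k,·)). -/
open MeasureTheory Set Filter Topology BoundedContinuousFunction

set_option linter.unusedSectionVars false

namespace JostAux2

variable {r : ℝ → ℝ} (hrc : Continuous r) (hri : Integrable r) (hr0 : ∀ t, 0 ≤ r t)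

noncomputable def QQ (r : ℝ → ℝ) (x : ℝ) : ℝ := ∫ t in Ici x, r t

include hrc hri hr0

lemma QQ_nonneg (x : ℝ) : 0 ≤ QQ r x :=
  setIntegral_nonneg measurableSet_Ici fun t _ => hr0 t

lemma QQ_le (x : ℝ) : QQ r x ≤ ∫ t, r t :=
  setIntegral_le_integral hri (Filter.Eventually.of_forall hr0)

lemma QQ_eq (x : ℝ) : QQ r x = QQ r 0 - ∫ t in (0:ℝ)..x, r t := by
  have h1 : ∀ y : ℝ, QQ r y = (∫ t, r t) - ∫ t in Iic y, r t := by
    intro y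
    have := integral_add_compl (measurableSet_Ici (a := y)) hri
    rw [compl_Ici] at this
    rw [QQ, ← this, integral_Iic_eq_integral_Iio]
    ring
  rw [h1, h1, ← intervalIntegral.integral_Iic_sub_Iic hri.integrableOn hri.integrableOn]
  ring

lemma QQ_hasDeriv (x : ℝ) : HasDerivAt (QQ r) (-(r x)) x := by
  have h : HasDerivAt (fun y => ∫ t in (0:ℝ)..y, r t) (r x) x :=
    intervalIntegral.integral_hasDerivAt_right hri.intervalIntegrable
      (hrc.stronglyMeasurable.stronglyMeasurableAtFilter) hrc.continuousAt
  have : HasDerivAt (fun y => QQ r 0 - ∫ t in (0:ℝ)..y, r t) (-(r x)) x := by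
    exact ((hasDerivAt_const x (QQ r 0)).sub h).congr_deriv (zero_sub _)
  exact this.congr_of_eventuallyEq (Filter.Eventually.of_forall fun y => QQ_eq hrc hri hr0 y)

lemma QQ_tendsto : Tendsto (QQ r) atTop (𝓝 0) := by
  have h := intervalIntegral_tendsto_integral_Ioi 0 hri.integrableOn tendsto_id
  have h2 : Tendsto (fun x => QQ r 0 - ∫ t in (0:ℝ)..x, r t) atTop
      (𝓝 (QQ r 0 - ∫ t in Ioi (0:ℝ), r t)) := (tendsto_const_nhds).sub h
  have h3 : QQ r 0 - ∫ t in Ioi (0:ℝ), r t = 0 := by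
    rw [QQ, integral_Ici_eq_integral_Ioi]; ring
  rw [h3] at h2
  exact h2.congr fun x => (QQ_eq hrc hri hr0 x).symm

lemma rQpow_integrable (n : ℕ) : Integrable (fun t => r t * QQ r t ^ n) := by
  have hQc : Continuous (QQ r) := by
    have := fun x => (QQ_hasDeriv hrc hri hr0 x).continuousAt
    exact continuous_iff_continuousAt.2 this
  refine Integrable.mono' (hri.const_mul ((∫ t, r t) ^ n)) ?_ ?_
  · exact (hrc.mul (hQc.pow n)).aestronglyMeasurable
  · refine Filter.Eventually.of_forall fun t => ?_
    rw [Real.norm_eq_abs, abs_mul, abs_of_nonneg (hr0 t), abs_pow,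
      abs_of_nonneg (QQ_nonneg hrc hri hr0 t)]
    rw [mul_comm]
    gcongr
    exacts [hr0 t, QQ_nonneg hrc hri hr0 t, QQ_le hrc hri hr0 t]

lemma key_identity (n : ℕ) (x : ℝ) :
    ∫ t in Ici x, r t * QQ r t ^ n = QQ r x ^ (n + 1) / (n + 1) := by
  have hQc : Continuous (QQ r) := by
    have := fun x => (QQ_hasDeriv hrc hri hr0 x).continuousAt
    exact continuous_iff_continuousAt.2 this
  have hF : ∀ y : ℝ, HasDerivAt (fun y => -(QQ r y ^ (n + 1)) / (n + 1))
      (r y * QQ r y ^ n) y := by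
    intro y
    have h1 : HasDerivAt (fun y => QQ r y ^ (n + 1))
        (((n : ℝ) + 1) * QQ r y ^ n * (-(r y))) y := by
      exact ((QQ_hasDeriv hrc hri hr0 y).pow (n + 1)).congr_deriv (by simp)
    have h2 := (h1.neg).div_const ((n : ℝ) + 1)
    refine h2.congr_deriv ?_
    have : ((n : ℝ) + 1) ≠ 0 := by positivity
    rw [div_eq_iff this]
    ring
  have htend : Tendsto (fun y => -(QQ r y ^ (n + 1)) / (n + 1)) atTop (𝓝 0) := by
    have := (QQ_tendsto hrc hri hr0).pow (n + 1)
    have h2 := (this.neg).div_const ((n : ℝ) + 1)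
    simpa using h2
  have := integral_Ioi_of_hasDerivAt_of_tendsto
    (f := fun y => -(QQ r y ^ (n + 1)) / (n + 1)) (f' := fun t => r t * QQ r t ^ n)
    (a := x) (m := 0)
    ((hF x).continuousAt.continuousWithinAt) (fun y _ => hF y)
    ((rQpow_integrable hrc hri hr0 n).integrableOn) htend
  rw [integral_Ici_eq_integral_Ioi, this]
  ring

end JostAux2

open MeasureTheory Set Filter Topology BoundedContinuousFunction

namespace JostAux

noncomputable def Kc (k x t : ℝ) : ℂ := ((Real.sin (k * (min x t - t)) / k : ℝ) : ℂ)

lemma Kc_continuous (k : ℝ) : Continuous fun p : ℝ × ℝ => Kc k p.1 p.2 := by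
  unfold Kc; fun_prop

lemma Kc_norm_le (k x t : ℝ) (hk : k ≠ 0) : ‖Kc k x t‖ ≤ 1 / |k| := by
  rw [Kc, Complex.norm_real, Real.norm_eq_abs, abs_div]
  gcongr
  exact Real.abs_sin_le_one _

lemma Kc_zero {k x t : ℝ} (h : t ≤ x) : Kc k x t = 0 := by
  simp [Kc, min_eq_right h]

lemma Kc_eq {k x t : ℝ} (h : x ≤ t) : Kc k x t = ((Real.sin (k * (x - t)) / k : ℝ) : ℂ) := by
  simp [Kc, min_eq_left h]

variable {q : ℝ → ℂ} {k : ℝ}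

/-- Integrability of the integrand. -/
lemma integ (hq : Continuous q) (hqn : Integrable fun t => ‖q t‖) (hk : k ≠ 0)
    {f : ℝ → ℂ} (hf : Continuous f) {C : ℝ} (hC : ∀ x, ‖f x‖ ≤ C) (x : ℝ) :
    Integrable fun t => Kc k x t * q t * f t := by
  have hC0 : 0 ≤ C := le_trans (norm_nonneg _) (hC 0)
  refine Integrable.mono' ((hqn.const_mul (1 / |k| * C))) ?_ ?_
  · exact (((Kc_continuous k).comp (Continuous.prodMk_right x)).mul hq |>.mul hf).aestronglyMeasurable
  · refine Filter.Eventually.of_forall fun t => ?_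
    calc ‖Kc k x t * q t * f t‖ = ‖Kc k x t‖ * ‖q t‖ * ‖f t‖ := by
          rw [norm_mul, norm_mul]
      _ ≤ (1 / |k|) * ‖q t‖ * C := by
          gcongr
          · exact Kc_norm_le k x t hk
          · exact hC t
      _ = 1 / |k| * C * ‖q t‖ := by ring

/-- The set integral over `Ici x` equals the full integral with kernel `Kc`. -/
lemma ici_eq (hq : Continuous q) (hqn : Integrable fun t => ‖q t‖) (hk : k ≠ 0)
    {f : ℝ → ℂ} (hf : Continuous f) {C : ℝ} (hC : ∀ x, ‖f x‖ ≤ C) (x : ℝ) :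
    ∫ t in Ici x, ((Real.sin (k * (x - t)) / k : ℝ) : ℂ) * q t * f t
      = ∫ t, Kc k x t * q t * f t := by
  have hint := integ hq hqn hk hf hC x
  rw [← integral_add_compl (measurableSet_Ici (a := x)) hint, compl_Ici]
  have h1 : ∫ t in Iio x, Kc k x t * q t * f t = 0 := by
    rw [setIntegral_congr_fun measurableSet_Iio
      (fun t ht => by rw [Kc_zero (le_of_lt ht), zero_mul, zero_mul] : EqOn _ (fun _ => (0:ℂ)) _)]
    simp
  rw [h1, add_zero]
  exact setIntegral_congr_fun measurableSet_Ici fun t ht => by rw [Kc_eq ht]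

noncomputable def Tfun (q : ℝ → ℂ) (k : ℝ) (f : ℝ → ℂ) (x : ℝ) : ℂ :=
  Complex.exp (Complex.I * k * x) - ∫ t, Kc k x t * q t * f t

lemma Tcont (hq : Continuous q) (hqn : Integrable fun t => ‖q t‖) (hk : k ≠ 0)
    (f : ℝ →ᵇ ℂ) : Continuous (Tfun q k f) := by
  have h1 : Continuous fun x : ℝ => Complex.exp (Complex.I * k * x) := by fun_prop
  refine h1.sub ?_
  refine continuous_of_dominated (bound := fun t => 1 / |k| * ‖f‖ * ‖q t‖) ?_ ?_ ?_ ?_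
  · intro x
    exact (((Kc_continuous k).comp (Continuous.prodMk_right x)).mul hq |>.mul
      f.continuous).aestronglyMeasurable
  · intro x
    refine Filter.Eventually.of_forall fun t => ?_
    calc ‖Kc k x t * q t * f t‖ = ‖Kc k x t‖ * ‖q t‖ * ‖f t‖ := by rw [norm_mul, norm_mul]
      _ ≤ (1 / |k|) * ‖q t‖ * ‖f‖ := by
          gcongr
          · exact Kc_norm_le k x t hk
          · exact f.norm_coe_le_norm t
      _ = 1 / |k| * ‖f‖ * ‖q t‖ := by ring
  · exact hqn.const_mul _
  · refine Filter.Eventually.of_forall fun t => ?_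
    exact (((Kc_continuous k).comp (by fun_prop : Continuous fun x : ℝ => (x, t))).mul
      continuous_const).mul continuous_const

lemma Tbdd (hq : Continuous q) (hqn : Integrable fun t => ‖q t‖) (hk : k ≠ 0)
    (f : ℝ →ᵇ ℂ) (x : ℝ) :
    ‖Tfun q k f x‖ ≤ 1 + 1 / |k| * ‖f‖ * ∫ t, ‖q t‖ := by
  refine (norm_sub_le _ _).trans ?_
  have h1 : ‖Complex.exp (Complex.I * k * x)‖ = 1 := by
    rw [Complex.norm_exp]; simp
  rw [h1]
  gcongr 1 + ?_
  rw [show (1 / |k| * ‖f‖ * ∫ t, ‖q t‖) = ∫ t, 1 / |k| * ‖f‖ * ‖q t‖ from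
    (integral_const_mul _ _).symm]
  refine norm_integral_le_of_norm_le (hqn.const_mul (1 / |k| * ‖f‖)) ?_
  refine Filter.Eventually.of_forall fun t => ?_
  calc ‖Kc k x t * q t * f t‖ = ‖Kc k x t‖ * ‖q t‖ * ‖f t‖ := by rw [norm_mul, norm_mul]
    _ ≤ (1 / |k|) * ‖q t‖ * ‖f‖ := by
        gcongr
        · exact Kc_norm_le k x t hk
        · exact f.norm_coe_le_norm t
    _ = 1 / |k| * ‖f‖ * ‖q t‖ := by ring

noncomputable def Tmap (hq : Continuous q) (hqn : Integrable fun t => ‖q t‖) (hk : k ≠ 0)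
    (f : ℝ →ᵇ ℂ) : ℝ →ᵇ ℂ :=
  ofNormedAddCommGroup (Tfun q k f) (Tcont hq hqn hk f) _ (Tbdd hq hqn hk f)

lemma Tmap_apply (hq : Continuous q) (hqn : Integrable fun t => ‖q t‖) (hk : k ≠ 0)
    (f : ℝ →ᵇ ℂ) (x : ℝ) : Tmap hq hqn hk f x = Tfun q k f x := rfl

end JostAux


namespace JostAux
open JostAux2
variable {q : ℝ → ℂ} {k : ℝ}

lemma iterate_est (hq : Continuous q) (hqn : Integrable fun t => ‖q t‖) (hk : k ≠ 0)
    (n : ℕ) (f g : ℝ →ᵇ ℂ) (x : ℝ) :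
    ‖((Tmap hq hqn hk)^[n] f) x - ((Tmap hq hqn hk)^[n] g) x‖ ≤
      QQ (fun t => ‖q t‖ / |k|) x ^ n / n.factorial * dist f g := by
  have hrc : Continuous (fun t => ‖q t‖ / |k|) := hq.norm.div_const _
  have hri : Integrable (fun t => ‖q t‖ / |k|) := hqn.div_const _
  have hr0 : ∀ t, 0 ≤ ‖q t‖ / |k| := fun t => div_nonneg (norm_nonneg _) (abs_nonneg _)
  induction n generalizing x with
  | zero =>
    simpa [dist_eq_norm] using dist_coe_le_dist (f := f) (g := g) x
  | succ n ih =>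
    set r : ℝ → ℝ := fun t => ‖q t‖ / |k| with hr
    set u := (Tmap hq hqn hk)^[n] f with hu'
    set v := (Tmap hq hqn hk)^[n] g with hv'
    set d := dist f g with hd'
    have hd0 : 0 ≤ d := dist_nonneg
    rw [Function.iterate_succ_apply', Function.iterate_succ_apply']
    have hu := integ hq hqn hk u.continuous (fun y => u.norm_coe_le_norm y) x
    have hv := integ hq hqn hk v.continuous (fun y => v.norm_coe_le_norm y) x
    have heq : (Tmap hq hqn hk u) x - (Tmap hq hqn hk v) x
        = -∫ t, Kc k x t * q t * (u t - v t) := by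
      have h2 : (∫ t, Kc k x t * q t * (u t - v t))
          = (∫ t, Kc k x t * q t * u t) - ∫ t, Kc k x t * q t * v t := by
        rw [← integral_sub hu hv]
        congr 1; funext t; ring
      rw [Tmap_apply, Tmap_apply, Tfun, Tfun, h2]; ring
    rw [heq, norm_neg]
    have hboundInt : Integrable
        (Set.indicator (Ici x) fun t => r t * QQ r t ^ n * (d / n.factorial)) :=
      ((rQpow_integrable hrc hri hr0 n).mul_const _).indicator measurableSet_Ici
    refine le_trans (norm_integral_le_of_norm_le hboundInt
      (Filter.Eventually.of_forall (fun t => ?_))) ?_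
    swap
    · rw [integral_indicator measurableSet_Ici, integral_mul_const,
        key_identity hrc hri hr0 n x, Nat.factorial_succ]
      have h1 : (n.factorial : ℝ) ≠ 0 := Nat.cast_ne_zero.2 n.factorial_ne_zero
      have h2 : ((n:ℝ) + 1) ≠ 0 := by positivity
      push_cast
      field_simp
      exact le_rfl
    · by_cases ht : t ∈ Ici x
      · rw [Set.indicator_of_mem ht]
        calc ‖Kc k x t * q t * (u t - v t)‖ = ‖Kc k x t‖ * ‖q t‖ * ‖u t - v t‖ := by
              rw [norm_mul, norm_mul]
          _ ≤ (1 / |k|) * ‖q t‖ * (QQ r t ^ n / n.factorial * d) := by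
              gcongr
              · exact Kc_norm_le k x t hk
              · exact ih t
          _ = r t * QQ r t ^ n * (d / n.factorial) := by
              simp only [hr]; ring
      · rw [Set.indicator_of_notMem ht, Kc_zero (le_of_lt (lt_of_not_ge ht)), zero_mul, zero_mul,
          norm_zero]

end JostAux

open JostAux JostAux2 in
/-- Existence and uniqueness of the right Jost solution `f₊(k,·)`: for a Faddeev-class
potential `q` and nonzero real `k`, there is a unique bounded continuous `f : ℝ → ℂ` with
`f x = e^{ikx} − ∫_x^∞ (sin(k(x−t))/k) q(t) f(t) dt`. -/
theorem right_jost_solution_exists_unique (q : ℝ → ℂ) (hq : Continuous q)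
    (hq' : Integrable (fun x => (1 + |x|) * ‖q x‖)) (k : ℝ) (hk : k ≠ 0) :
    ∃! f : ℝ → ℂ, Continuous f ∧ (∃ C : ℝ, ∀ x, ‖f x‖ ≤ C) ∧
      ∀ x : ℝ, f x = Complex.exp (Complex.I * k * x) -
        ∫ t in Set.Ici x, ((Real.sin (k * (x - t)) / k : ℝ) : ℂ) * q t * f t := by
  have hqn : Integrable fun t => ‖q t‖ := by
    refine hq'.mono' hq.norm.aestronglyMeasurable (Filter.Eventually.of_forall fun t => ?_)
    rw [norm_norm]
    exact le_mul_of_one_le_left (norm_nonneg _) (by linarith [abs_nonneg t])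
  set r : ℝ → ℝ := fun t => ‖q t‖ / |k| with hr
  have hrc : Continuous r := hq.norm.div_const _
  have hri : Integrable r := hqn.div_const _
  have hr0 : ∀ t, 0 ≤ r t := fun t => div_nonneg (norm_nonneg _) (abs_nonneg _)
  set A : ℝ := ∫ t, r t with hA
  have hA0 : 0 ≤ A := integral_nonneg hr0
  set T := Tmap hq hqn hk with hT
  -- distance bound on iterates
  have hdist : ∀ (n : ℕ) (f g : ℝ →ᵇ ℂ),
      dist (T^[n] f) (T^[n] g) ≤ A ^ n / n.factorial * dist f g := by
    intro n f g
    have hc : (0:ℝ) ≤ A ^ n / n.factorial * dist f g := by positivity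
    refine (BoundedContinuousFunction.dist_le hc).2 fun x => ?_
    rw [dist_eq_norm]
    refine (iterate_est hq hqn hk n f g x).trans ?_
    have hpow : QQ r x ^ n ≤ A ^ n :=
      pow_le_pow_left₀ (QQ_nonneg hrc hri hr0 x) (QQ_le hrc hri hr0 x) n
    gcongr
  -- choose n with A^n/n! < 1
  obtain ⟨n, hn⟩ : ∃ n : ℕ, A ^ n / n.factorial < 1 := by
    have h := FloorSemiring.tendsto_pow_div_factorial_atTop A
    exact (h.eventually_lt_const one_pos).exists
  set K : NNReal := ⟨A ^ n / n.factorial, by positivity⟩ with hK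
  have hCW : ContractingWith K (T^[n]) := by
    constructor
    · exact_mod_cast hn
    · exact LipschitzWith.of_dist_le_mul fun f g => hdist n f g
  set p : ℝ →ᵇ ℂ := hCW.fixedPoint (T^[n]) with hp'
  have hp : Function.IsFixedPt T p := hCW.isFixedPt_fixedPoint_iterate
  have huniq : ∀ u : ℝ →ᵇ ℂ, Function.IsFixedPt T u → u = p := fun u hu =>
    hCW.fixedPoint_unique (hu.iterate n)
  refine ⟨⇑p, ⟨p.continuous, ⟨‖p‖, fun x => p.norm_coe_le_norm x⟩, fun x => ?_⟩, ?_⟩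
  · conv_lhs => rw [← hp]
    rw [ici_eq hq hqn hk p.continuous (fun y => p.norm_coe_le_norm y) x]
    rfl
  · rintro g ⟨hgc, ⟨C, hgC⟩, hgeq⟩
    set g' : ℝ →ᵇ ℂ := BoundedContinuousFunction.ofNormedAddCommGroup g hgc C hgC with hg'
    have hcoe : ⇑g' = g := rfl
    have hfix : Function.IsFixedPt T g' := by
      ext x
      show Tfun q k g' x = g x
      rw [Tfun, ← ici_eq hq hqn hk g'.continuous (fun y => g'.norm_coe_le_norm y) x, hcoe]
      exact (hgeq x).symm
    have hgp := huniq g' hfix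
    funext x
    calc g x = g' x := rfl
      _ = p x := by rw [hgp]
end

section
/- Let q : ℝ → ℂ be continuous with ∫_ℝ (1+|x|)|q(x)| dx < ∞, let k be a nonzero real number, and let f : ℝ → ℂ be a bounded continuous function satisfying f(x) = e^{ikx} − ∫_x^∞ (sin(k(x−t))/k) · q(t) · f(t) dt for all x. Then f is twice continuously differentiable and satisfies the Liouville–Schrödinger equation −f''(x) + q(x) f(x) = k² f(x) for every x ∈ ℝ. -/
open MeasureTheory

theorem hasDerivAt_integral_Ici {g : ℝ → ℂ} (hgi : Integrable g) (hgc : Continuous g) (x : ℝ) :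
    HasDerivAt (fun y => ∫ t in Set.Ici y, g t) (-(g x)) x := by
  have key : ∀ y : ℝ, ∫ t in Set.Ici y, g t
      = (∫ t, g t) - (∫ t in Set.Iic (0:ℝ), g t) - ∫ t in (0:ℝ)..y, g t := by
    intro y
    rw [← intervalIntegral.integral_Iic_sub_Iic hgi.integrableOn hgi.integrableOn,
      MeasureTheory.integral_Ici_eq_integral_Ioi,
      ← intervalIntegral.integral_Iic_add_Ioi (b := y) hgi.integrableOn hgi.integrableOn]
    ring
  have h1 : HasDerivAt (fun u => ∫ t in (0:ℝ)..u, g t) (g x) x :=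
    intervalIntegral.integral_hasDerivAt_right (hgi.intervalIntegrable)
      (hgc.stronglyMeasurableAtFilter _ _) hgc.continuousAt
  have h2 := (h1.const_sub ((∫ t, g t) - (∫ t in Set.Iic (0:ℝ), g t)))
  simpa [key] using h2


/-- The right Jost solution solves the Liouville–Schrödinger equation: if `f` is a bounded
continuous solution of the Volterra equation
`f x = e^{ikx} − ∫_x^∞ (sin(k(x−t))/k) q(t) f(t) dt`,
then `f` is `C²` and `−f'' + q f = k² f`. -/
theorem jost_solution_solves_schrodinger (q : ℝ → ℂ) (hq : Continuous q)
    (hq' : Integrable (fun x => (1 + |x|) * ‖q x‖)) (k : ℝ) (hk : k ≠ 0)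
    (f : ℝ → ℂ) (hf : Continuous f) (hfb : ∃ C : ℝ, ∀ x, ‖f x‖ ≤ C)
    (heq : ∀ x : ℝ, f x = Complex.exp (Complex.I * k * x) -
        ∫ t in Set.Ici x, ((Real.sin (k * (x - t)) / k : ℝ) : ℂ) * q t * f t) :
    ContDiff ℝ 2 f ∧
      ∀ x : ℝ, -(deriv (deriv f) x) + q x * f x = (k : ℂ) ^ 2 * f x := by
  obtain ⟨C, hC⟩ := hfb
  -- integrability of q·f and the trig-weighted versions
  have hqi : Integrable q := by
    refine (hq'.mono' hq.aestronglyMeasurable ?_)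
    filter_upwards with x
    have h1 : (0:ℝ) ≤ |x| := abs_nonneg x
    have : ‖q x‖ ≤ (1 + |x|) * ‖q x‖ := by nlinarith [norm_nonneg (q x)]
    simpa [abs_of_nonneg (by positivity : (0:ℝ) ≤ (1+|x|) * ‖q x‖)] using this
  set g : ℝ → ℂ := fun t => q t * f t with hg_def
  have hgc : Continuous g := hq.mul hf
  have hgi : Integrable g := by
    refine (hqi.norm.const_mul C).mono' hgc.aestronglyMeasurable ?_
    filter_upwards with t
    calc ‖g t‖ = ‖q t‖ * ‖f t‖ := norm_mul _ _
      _ ≤ ‖q t‖ * C := by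
          have := hC t
          have := norm_nonneg (q t)
          nlinarith
      _ = C * ‖q t‖ := by ring
  set gc : ℝ → ℂ := fun t => (Real.cos (k*t) : ℂ) * g t with hgc_def
  set gs : ℝ → ℂ := fun t => (Real.sin (k*t) : ℂ) * g t with hgs_def
  have hgcc : Continuous gc := (Complex.continuous_ofReal.comp
    (Real.continuous_cos.comp (continuous_const.mul continuous_id))).mul hgc
  have hgsc : Continuous gs := (Complex.continuous_ofReal.comp
    (Real.continuous_sin.comp (continuous_const.mul continuous_id))).mul hgc
  have hgci : Integrable gc := by
    refine hgi.norm.mono' hgcc.aestronglyMeasurable ?_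
    filter_upwards with t
    calc ‖gc t‖ = ‖((Real.cos (k*t) : ℂ))‖ * ‖g t‖ := norm_mul _ _
      _ ≤ 1 * ‖g t‖ := by
          gcongr
          rw [Complex.norm_real, Real.norm_eq_abs]; exact Real.abs_cos_le_one _
      _ = ‖g t‖ := one_mul _
  have hgsi : Integrable gs := by
    refine hgi.norm.mono' hgsc.aestronglyMeasurable ?_
    filter_upwards with t
    calc ‖gs t‖ = ‖((Real.sin (k*t) : ℂ))‖ * ‖g t‖ := norm_mul _ _
      _ ≤ 1 * ‖g t‖ := by
          gcongr
          rw [Complex.norm_real, Real.norm_eq_abs]; exact Real.abs_sin_le_one _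
      _ = ‖g t‖ := one_mul _
  set A : ℝ → ℂ := fun x => ∫ t in Set.Ici x, gc t with hA_def
  set B : ℝ → ℂ := fun x => ∫ t in Set.Ici x, gs t with hB_def
  have hA : ∀ x, HasDerivAt A (-(gc x)) x := fun x => hasDerivAt_integral_Ici hgci hgcc x
  have hB : ∀ x, HasDerivAt B (-(gs x)) x := fun x => hasDerivAt_integral_Ici hgsi hgsc x
  -- rewrite the Volterra equation
  have hf_eq : ∀ x, f x = Complex.exp (Complex.I * k * x)
      - ((Real.sin (k*x) : ℂ)/k) * A x + ((Real.cos (k*x) : ℂ)/k) * B x := by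
    intro x
    have hsplit : (∫ t in Set.Ici x, ((Real.sin (k * (x - t)) / k : ℝ) : ℂ) * q t * f t)
        = ((Real.sin (k*x) : ℂ)/k) * A x - ((Real.cos (k*x) : ℂ)/k) * B x := by
      have hpt : ∀ t, ((Real.sin (k * (x - t)) / k : ℝ) : ℂ) * q t * f t
          = ((Real.sin (k*x) : ℂ)/k) * gc t - ((Real.cos (k*x) : ℂ)/k) * gs t := by
        intro t
        have hsin : Real.sin (k * (x - t))
            = Real.sin (k*x) * Real.cos (k*t) - Real.cos (k*x) * Real.sin (k*t) := by
          rw [mul_sub, Real.sin_sub]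
        rw [hsin]
        simp only [hg_def, hgc_def, hgs_def]
        push_cast
        ring
      calc (∫ t in Set.Ici x, ((Real.sin (k * (x - t)) / k : ℝ) : ℂ) * q t * f t)
          = ∫ t in Set.Ici x, (((Real.sin (k*x) : ℂ)/k) * gc t
              - ((Real.cos (k*x) : ℂ)/k) * gs t) := by
            exact setIntegral_congr_fun measurableSet_Ici (fun t _ => hpt t)
        _ = ((Real.sin (k*x) : ℂ)/k) * A x - ((Real.cos (k*x) : ℂ)/k) * B x := by
            rw [integral_sub ((hgci.integrableOn).const_mul _) ((hgsi.integrableOn).const_mul _),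
              integral_const_mul, integral_const_mul]
    rw [heq x, hsplit]; ring
  have hk' : (k:ℂ) ≠ 0 := Complex.ofReal_ne_zero.mpr hk
  set F : ℝ → ℂ := fun x => Complex.exp (Complex.I * k * x)
      - ((Real.sin (k*x) : ℂ)/k) * A x + ((Real.cos (k*x) : ℂ)/k) * B x with hF_def
  have hfF : f = F := funext hf_eq
  set f₁ : ℝ → ℂ := fun x => Complex.I*k*Complex.exp (Complex.I*k*x)
      - ((Real.cos (k*x):ℂ)) * A x - ((Real.sin (k*x):ℂ)) * B x with hf1_def
  have hexp : ∀ x : ℝ, HasDerivAt (fun y:ℝ => Complex.exp (Complex.I*k*y))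
      (Complex.exp (Complex.I*k*x) * (Complex.I*k)) x := by
    intro x
    have h1 : HasDerivAt (fun z:ℂ => Complex.exp (Complex.I*k*z))
        (Complex.exp (Complex.I*k*x) * (Complex.I*k)) (x:ℂ) := by
      have h := ((Complex.hasDerivAt_exp (Complex.I*k*x)).comp (x:ℂ)
        ((hasDerivAt_id (x:ℂ)).const_mul (Complex.I*k)))
      simp only [mul_one] at h
      exact h
    exact h1.comp_ofReal
  have hsin : ∀ x : ℝ, HasDerivAt (fun y:ℝ => ((Real.sin (k*y) : ℝ):ℂ))
      ((Real.cos (k*x) * k : ℝ):ℂ) x := by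
    intro x
    have h1 : HasDerivAt (fun y:ℝ => Real.sin (k*y)) (Real.cos (k*x) * k) x := by
      have h := (Real.hasDerivAt_sin (k*x)).comp x ((hasDerivAt_id x).const_mul k)
      simp only [mul_one] at h
      exact h
    exact h1.ofReal_comp
  have hcos : ∀ x : ℝ, HasDerivAt (fun y:ℝ => ((Real.cos (k*y) : ℝ):ℂ))
      ((-Real.sin (k*x) * k : ℝ):ℂ) x := by
    intro x
    have h1 : HasDerivAt (fun y:ℝ => Real.cos (k*y)) (-Real.sin (k*x) * k) x := by
      have h := (Real.hasDerivAt_cos (k*x)).comp x ((hasDerivAt_id x).const_mul k)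
      simp only [mul_one] at h
      exact h
    exact h1.ofReal_comp
  have hd1 : ∀ x, HasDerivAt f (f₁ x) x := by
    intro x
    rw [hfF]
    have h2 := ((hsin x).div_const k).mul (hA x)
    have h3 := ((hcos x).div_const k).mul (hB x)
    have h4 := ((hexp x).sub h2).add h3
    refine h4.congr_deriv (Eq.symm ?_)
    simp only [hf1_def, hgc_def, hgs_def, hg_def]
    push_cast
    field_simp
    ring
  have hd2 : ∀ x, HasDerivAt f₁ (-(k:ℂ)^2 * f x + q x * f x) x := by
    intro x
    have h2 := (hcos x).mul (hA x)
    have h3 := (hsin x).mul (hB x)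
    have h4 := ((((hexp x).const_mul (Complex.I * k)).sub h2).sub h3)
    have hpyth2 : Complex.sin (↑k*↑x)^2 + Complex.cos (↑k*↑x)^2 = 1 :=
      Complex.sin_sq_add_cos_sq _
    have hI : (Complex.I)^2 = -1 := Complex.I_sq
    have h5 : -(k:ℂ)^2 * f x = -(k:ℂ)^2*Complex.exp (Complex.I*k*x)
        + k*(Real.sin (k*x):ℂ)*A x - k*(Real.cos (k*x):ℂ)*B x := by
      rw [hf_eq x]; field_simp; ring
    have hRHS : Complex.I * ↑k * (Complex.exp (Complex.I * ↑k * ↑x) * (Complex.I * ↑k)) -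
        (↑(-Real.sin (k * x) * k) * A x + ↑(Real.cos (k * x)) * -gc x) -
        (↑(Real.cos (k * x) * k) * B x + ↑(Real.sin (k * x)) * -gs x)
        = -(k:ℂ)^2*Complex.exp (Complex.I*k*x)
          + k*(Real.sin (k*x):ℂ)*A x - k*(Real.cos (k*x):ℂ)*B x + q x * f x := by
      simp only [hgc_def, hgs_def, hg_def]
      push_cast
      linear_combination (k:ℂ)^2*Complex.exp (Complex.I*↑k*↑x)*hI + (q x * f x)*hpyth2
    refine h4.congr_deriv (Eq.symm ?_)
    rw [hRHS]
    linear_combination h5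
  have hdiff1 : Differentiable ℝ f := fun x => (hd1 x).differentiableAt
  have hderiv1 : deriv f = f₁ := funext fun x => (hd1 x).deriv
  have hdiff2 : Differentiable ℝ f₁ := fun x => (hd2 x).differentiableAt
  have hderiv2 : ∀ x, deriv f₁ x = -(k:ℂ)^2 * f x + q x * f x := fun x => (hd2 x).deriv
  constructor
  · rw [show (2 : WithTop ℕ∞) = 1 + 1 from rfl, contDiff_succ_iff_deriv]
    refine ⟨hdiff1, by simp, ?_⟩
    rw [hderiv1, contDiff_one_iff_deriv]
    refine ⟨hdiff2, ?_⟩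
    have hdf : deriv f₁ = fun x => -(k:ℂ)^2 * f x + q x * f x := funext hderiv2
    rw [hdf]
    exact (continuous_const.mul hf).add (hq.mul hf)
  · intro x
    rw [hderiv1, hderiv2 x]
    ring
end

section
/- Let q : ℝ → ℂ be continuous with ∫_ℝ (1+|x|)|q(x)| dx < ∞, let k be a nonzero real number, and let f : ℝ → ℂ be a bounded continuous function satisfying f(x) = e^{ikx} − ∫_x^∞ (sin(k(x−t))/k) · q(t) · f(t) dt for all x. Then f(x) · e^{−ikx} → 1 as x → +∞. -/
open MeasureTheory Filter

/-- Asymptotics of the right Jost solution: if `f` is a bounded continuous solution of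
`f x = e^{ikx} − ∫_x^∞ (sin(k(x−t))/k) q(t) f(t) dt`, then `f(x)·e^{−ikx} → 1`
as `x → +∞`. -/
theorem right_jost_solution_asymptotics (q : ℝ → ℂ) (hq : Continuous q)
    (hq' : Integrable (fun x => (1 + |x|) * ‖q x‖)) (k : ℝ) (hk : k ≠ 0)
    (f : ℝ → ℂ) (hf : Continuous f) (hfb : ∃ C : ℝ, ∀ x, ‖f x‖ ≤ C)
    (heq : ∀ x : ℝ, f x = Complex.exp (Complex.I * k * x) -
        ∫ t in Set.Ici x, ((Real.sin (k * (x - t)) / k : ℝ) : ℂ) * q t * f t) :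
    Tendsto (fun x : ℝ => f x * Complex.exp (-(Complex.I * k * x))) atTop (nhds 1) := by
  obtain ⟨C, hC⟩ := hfb
  have hC0 : 0 ≤ C := le_trans (norm_nonneg _) (hC 0)
  have hqi : Integrable (fun t : ℝ => ‖q t‖) := by
    refine hq'.mono hq.norm.aestronglyMeasurable (Filter.Eventually.of_forall fun x => ?_)
    have h1 : (0:ℝ) ≤ ‖q x‖ := norm_nonneg _
    have h2 : (0:ℝ) ≤ |x| := abs_nonneg _
    rw [norm_norm, Real.norm_eq_abs, abs_of_nonneg (by positivity)]
    nlinarith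
  -- the tail of the integral of ‖q‖ tends to 0
  have htail : Tendsto (fun x : ℝ => ∫ t in Set.Ici x, ‖q t‖) atTop (nhds 0) := by
    have h1 : Tendsto (fun x : ℝ => ∫ t in Set.Iic x, ‖q t‖) atTop
        (nhds (∫ t, ‖q t‖)) :=
      (MeasureTheory.aecover_Iic (μ := volume) tendsto_id).integral_tendsto_of_countably_generated
        hqi
    have h2 : ∀ x : ℝ, ∫ t in Set.Ici x, ‖q t‖ = (∫ t, ‖q t‖) - ∫ t in Set.Iic x, ‖q t‖ := by
      intro x
      have := MeasureTheory.integral_add_compl (measurableSet_Iic (a := x)) hqi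
      rw [Set.compl_Iic] at this
      rw [MeasureTheory.integral_Ici_eq_integral_Ioi]
      linarith
    simp only [h2]
    have := h1.const_sub (∫ t, ‖q t‖)
    simpa using this
  -- pointwise bound
  have hbound : ∀ x : ℝ, ‖f x * Complex.exp (-(Complex.I * k * x)) - 1‖ ≤
      (C / |k|) * ∫ t in Set.Ici x, ‖q t‖ := by
    intro x
    have hexp1 : ‖Complex.exp (-(Complex.I * k * x))‖ = 1 := by
      rw [Complex.norm_exp]
      simp
    have hfact : f x * Complex.exp (-(Complex.I * k * x)) - 1 =
        (f x - Complex.exp (Complex.I * k * x)) * Complex.exp (-(Complex.I * k * x)) := by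
      have : Complex.exp (Complex.I * k * x) * Complex.exp (-(Complex.I * k * x)) = 1 := by
        rw [← Complex.exp_add]; simp
      ring_nf
      ring_nf at this
      rw [mul_comm] at this
      rw [this]
      ring
    rw [hfact, norm_mul, hexp1, mul_one]
    have hfe : f x - Complex.exp (Complex.I * k * x) =
        -∫ t in Set.Ici x, ((Real.sin (k * (x - t)) / k : ℝ) : ℂ) * q t * f t := by
      rw [heq x]; ring
    rw [hfe, norm_neg]
    calc ‖∫ t in Set.Ici x, ((Real.sin (k * (x - t)) / k : ℝ) : ℂ) * q t * f t‖
        ≤ ∫ t in Set.Ici x, ‖((Real.sin (k * (x - t)) / k : ℝ) : ℂ) * q t * f t‖ :=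
          MeasureTheory.norm_integral_le_integral_norm _
      _ ≤ ∫ t in Set.Ici x, (C / |k|) * ‖q t‖ := by
          refine MeasureTheory.integral_mono_of_nonneg
            (Filter.Eventually.of_forall fun t => norm_nonneg _)
            ((hqi.const_mul _).integrableOn)
            (Filter.Eventually.of_forall fun t => ?_)
          dsimp only
          rw [norm_mul, norm_mul, Complex.norm_real, Real.norm_eq_abs, abs_div]
          have hs : |Real.sin (k * (x - t))| ≤ 1 := Real.abs_sin_le_one _
          have hk' : (0:ℝ) < |k| := abs_pos.mpr hk
          have h1 : |Real.sin (k * (x - t))| / |k| ≤ 1 / |k| := by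
            gcongr
          calc |Real.sin (k * (x - t))| / |k| * ‖q t‖ * ‖f t‖
              ≤ (1 / |k|) * ‖q t‖ * C := by
                apply mul_le_mul (mul_le_mul_of_nonneg_right h1 (norm_nonneg _)) (hC t)
                  (norm_nonneg _)
                positivity
            _ = C / |k| * ‖q t‖ := by field_simp
      _ = (C / |k|) * ∫ t in Set.Ici x, ‖q t‖ := integral_const_mul _ _
  rw [tendsto_iff_norm_sub_tendsto_zero]
  have hlim : Tendsto (fun x : ℝ => (C / |k|) * ∫ t in Set.Ici x, ‖q t‖) atTop (nhds 0) := by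
    simpa using htail.const_mul (C / |k|)
  exact squeeze_zero (fun x => norm_nonneg _) hbound hlim
end

section
/- Let q : ℝ → ℂ be continuous with ∫_ℝ (1+|x|)|q(x)| dx < ∞, let k be a nonzero real number, and let f : ℝ → ℂ be a bounded continuous function satisfying f(x) = e^{−ikx} + ∫_{−∞}^x (sin(k(x−t))/k) · q(t) · f(t) dt for all x. Then f(x) · e^{ikx} → 1 as x → −∞. -/
open MeasureTheory Filter

/-- Tail of an integrable nonnegative function tends to zero at `-∞`. -/
lemma tail_integral_tendsto_zero (g : ℝ → ℝ) (hg : Integrable g) :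
    Tendsto (fun x : ℝ => ∫ t in Set.Iic x, g t) atBot (nhds 0) := by
  have h0 : (0 : ℝ) = ∫ t : ℝ, (0 : ℝ) := by simp
  have key : Tendsto (fun x : ℝ => ∫ t : ℝ, Set.indicator (Set.Iic x) g t) atBot
      (nhds (∫ t : ℝ, (0 : ℝ))) := by
    apply tendsto_integral_filter_of_dominated_convergence (fun t => |g t|)
    · filter_upwards with x
      exact (hg.aestronglyMeasurable.indicator measurableSet_Iic)
    · filter_upwards with x
      filter_upwards with t
      rw [Real.norm_eq_abs]
      rcases le_or_gt t x with h | h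
      · rw [Set.indicator_of_mem (by exact h)]
      · rw [Set.indicator_of_notMem (by simpa using h)]
        simp [abs_nonneg]
    · exact hg.abs
    · filter_upwards with t
      have : ∀ᶠ x in atBot, Set.indicator (Set.Iic x) g t = 0 := by
        filter_upwards [eventually_lt_atBot t] with x hx
        exact Set.indicator_of_notMem (by simpa using hx) _
      exact Tendsto.congr' (this.mono fun x hx => hx.symm) tendsto_const_nhds
  rw [h0]
  apply key.congr
  intro x
  exact integral_indicator measurableSet_Iic

/-- Asymptotics of the left Jost solution: if `f` is a bounded continuous solution of
`f x = e^{−ikx} + ∫_{−∞}^x (sin(k(x−t))/k) q(t) f(t) dt`, then `f(x)·e^{ikx} → 1`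
as `x → −∞`. -/
theorem left_jost_solution_asymptotics (q : ℝ → ℂ) (hq : Continuous q)
    (hq' : Integrable (fun x => (1 + |x|) * ‖q x‖)) (k : ℝ) (hk : k ≠ 0)
    (f : ℝ → ℂ) (hf : Continuous f) (hfb : ∃ C : ℝ, ∀ x, ‖f x‖ ≤ C)
    (heq : ∀ x : ℝ, f x = Complex.exp (-(Complex.I * k * x)) +
        ∫ t in Set.Iic x, ((Real.sin (k * (x - t)) / k : ℝ) : ℂ) * q t * f t) :
    Tendsto (fun x : ℝ => f x * Complex.exp (Complex.I * k * x)) atBot (nhds 1) := by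
  obtain ⟨C, hC⟩ := hfb
  have hC0 : 0 ≤ C := le_trans (norm_nonneg (f 0)) (hC 0)
  -- q is integrable in norm
  have hqn : Integrable (fun t : ℝ => ‖q t‖) := by
    apply hq'.mono' hq.norm.aestronglyMeasurable
    filter_upwards with t
    rw [Real.norm_eq_abs, abs_of_nonneg (norm_nonneg _)]
    nlinarith [norm_nonneg (q t), abs_nonneg t]
  have hqC : Integrable (fun t : ℝ => C / |k| * ‖q t‖) := hqn.const_mul _
  -- bound on the integrand
  have hbound : ∀ x t : ℝ, ‖((Real.sin (k * (x - t)) / k : ℝ) : ℂ) * q t * f t‖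
      ≤ C / |k| * ‖q t‖ := by
    intro x t
    rw [norm_mul, norm_mul, Complex.norm_real, Real.norm_eq_abs, abs_div]
    have h1 : |Real.sin (k * (x - t))| ≤ 1 := Real.abs_sin_le_one _
    have hk' : (0:ℝ) < |k| := abs_pos.mpr hk
    calc |Real.sin (k * (x - t))| / |k| * ‖q t‖ * ‖f t‖
        ≤ 1 / |k| * ‖q t‖ * C := by
          gcongr
          exact hC t
      _ = C / |k| * ‖q t‖ := by ring
  -- norm of the error
  have herr : ∀ x : ℝ, ‖f x * Complex.exp (Complex.I * k * x) - 1‖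
      ≤ C / |k| * ∫ t in Set.Iic x, ‖q t‖ := by
    intro x
    have hexp : Complex.exp (-(Complex.I * k * x)) * Complex.exp (Complex.I * k * x) = 1 := by
      rw [← Complex.exp_add]; ring_nf; exact Complex.exp_zero
    have hnorm1 : ‖Complex.exp (Complex.I * k * x)‖ = 1 := by
      rw [Complex.norm_exp]
      simp [mul_comm, Complex.mul_re]
    have : f x * Complex.exp (Complex.I * k * x) - 1
        = (∫ t in Set.Iic x, ((Real.sin (k * (x - t)) / k : ℝ) : ℂ) * q t * f t)
          * Complex.exp (Complex.I * k * x) := by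
      rw [heq x, add_mul, hexp]; ring
    rw [this, norm_mul, hnorm1, mul_one]
    calc ‖∫ t in Set.Iic x, ((Real.sin (k * (x - t)) / k : ℝ) : ℂ) * q t * f t‖
        ≤ ∫ t in Set.Iic x, C / |k| * ‖q t‖ := by
          apply norm_integral_le_of_norm_le (hqC.restrict)
          filter_upwards with t
          exact hbound x t
      _ = C / |k| * ∫ t in Set.Iic x, ‖q t‖ := integral_const_mul _ _
  -- conclude by squeezing
  rw [tendsto_iff_norm_sub_tendsto_zero]
  have htail : Tendsto (fun x : ℝ => C / |k| * ∫ t in Set.Iic x, ‖q t‖) atBot (nhds 0) := by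
    have := (tail_integral_tendsto_zero _ hqn).const_mul (C / |k|)
    simpa using this
  apply squeeze_zero (fun x => norm_nonneg _) (fun x => herr x) htail
end

section
/- Let q : ℝ → ℂ be continuous with ∫_ℝ (1+|x|)|q(x)| dx < ∞, let k be a nonzero real number, and let f : ℝ → ℂ be a bounded continuous function satisfying f(x) = e^{ikx} − ∫_x^∞ (sin(k(x−t))/k) · q(t) · f(t) dt for all x. Then |f(x)| ≤ exp( (1/|k|) ∫_ℝ |q(t)| dt ) for every x ∈ ℝ; i.e. the Neumann series bound for the Jost solution holds. -/
open MeasureTheory Filter Set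

/-- Derivative of a tail integral of a continuous integrable function. -/
lemma jost_tail_hasDerivAt {g : ℝ → ℝ} (hgc : Continuous g) (hgi : Integrable g) (x : ℝ) :
    HasDerivAt (fun y => ∫ t in Set.Ici y, g t) (-(g x)) x := by
  have hrepr : (fun y => ∫ t in Set.Ici y, g t)
      = fun y => ((∫ t, g t) - ∫ t in Set.Iic (0 : ℝ), g t) - ∫ t in (0 : ℝ)..y, g t := by
    funext y
    have h1 : (∫ t in Set.Iic y, g t) - ∫ t in Set.Iic (0 : ℝ), g t = ∫ t in (0 : ℝ)..y, g t :=
      intervalIntegral.integral_Iic_sub_Iic hgi.integrableOn hgi.integrableOn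
    have h2 : (∫ t in Set.Iic y, g t) + ∫ t in Set.Ioi y, g t = ∫ t, g t :=
      intervalIntegral.integral_Iic_add_Ioi hgi.integrableOn hgi.integrableOn
    rw [integral_Ici_eq_integral_Ioi]
    linarith
  rw [hrepr]
  simpa using (HasDerivAt.const_sub _ ((hgc.integral_hasStrictDerivAt 0 x).hasDerivAt))

/-- Tail integrals of an integrable function tend to zero. -/
lemma jost_tail_tendsto_zero {g : ℝ → ℝ} (hgi : Integrable g) :
    Tendsto (fun y => ∫ t in Set.Ici y, g t) atTop (nhds 0) := by
  have hempty : (⋂ y : ℝ, Set.Ici y) = (∅ : Set ℝ) := by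
    ext z
    simp only [Set.mem_iInter, Set.mem_Ici, Set.mem_empty_iff_false, iff_false, not_forall]
    exact ⟨z + 1, by push_neg; linarith⟩
  have := tendsto_setIntegral_of_antitone (f := g) (μ := volume)
    (s := fun y : ℝ => Set.Ici y) (fun y => measurableSet_Ici)
    (fun a b hab => Set.Ici_subset_Ici.mpr hab) ⟨0, hgi.integrableOn⟩
  rwa [hempty, Measure.restrict_empty, integral_zero_measure] at this

/-- Neumann-series bound for the right Jost solution: if `f` is a bounded continuous
solution of `f x = e^{ikx} − ∫_x^∞ (sin(k(x−t))/k) q(t) f(t) dt`, then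
`|f(x)| ≤ exp((1/|k|) ∫ |q|)` for every `x`. -/
theorem jost_solution_neumann_bound (q : ℝ → ℂ) (hq : Continuous q)
    (hq' : Integrable (fun x => (1 + |x|) * ‖q x‖)) (k : ℝ) (hk : k ≠ 0)
    (f : ℝ → ℂ) (hf : Continuous f) (hfb : ∃ C : ℝ, ∀ x, ‖f x‖ ≤ C)
    (heq : ∀ x : ℝ, f x = Complex.exp (Complex.I * k * x) -
        ∫ t in Set.Ici x, ((Real.sin (k * (x - t)) / k : ℝ) : ℂ) * q t * f t) :
    ∀ x : ℝ, ‖f x‖ ≤ Real.exp ((1 / |k|) * ∫ t : ℝ, ‖q t‖) := by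
  obtain ⟨C, hC⟩ := hfb
  have hk' : (0 : ℝ) < |k| := abs_pos.mpr hk
  have hC0 : 0 ≤ C := le_trans (norm_nonneg _) (hC 0)
  -- integrability of ‖q‖
  have hqInt : Integrable (fun t => ‖q t‖) := by
    refine hq'.mono' hq.norm.aestronglyMeasurable (Filter.Eventually.of_forall fun t => ?_)
    have h1 : (1 : ℝ) ≤ 1 + |t| := by linarith [abs_nonneg t]
    calc ‖‖q t‖‖ = 1 * ‖q t‖ := by rw [Real.norm_eq_abs, abs_of_nonneg (norm_nonneg _), one_mul]
    _ ≤ (1 + |t|) * ‖q t‖ := by gcongr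
  set g : ℝ → ℝ := fun t => ‖q t‖ * ‖f t‖ / |k| with hgdef
  set p : ℝ → ℝ := fun t => ‖q t‖ / |k| with hpdef
  have hgc : Continuous g := (hq.norm.mul hf.norm).div_const _
  have hpc : Continuous p := hq.norm.div_const _
  have hgnn : ∀ t, 0 ≤ g t := fun t => by positivity
  have hpnn : ∀ t, 0 ≤ p t := fun t => by positivity
  have hgInt : Integrable g := by
    refine (hqInt.mul_const (C / |k|)).mono' hgc.aestronglyMeasurable
      (Filter.Eventually.of_forall fun t => ?_)
    rw [Real.norm_eq_abs, abs_of_nonneg (hgnn t)]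
    calc ‖q t‖ * ‖f t‖ / |k| ≤ ‖q t‖ * C / |k| := by gcongr; exact hC t
    _ = ‖q t‖ * (C / |k|) := by ring
  have hpInt : Integrable p := hqInt.div_const _
  set h : ℝ → ℝ := fun y => ∫ t in Set.Ici y, g t with hhdef
  set Q : ℝ → ℝ := fun y => ∫ t in Set.Ici y, p t with hQdef
  have hhnn : ∀ y, 0 ≤ h y :=
    fun y => setIntegral_nonneg measurableSet_Ici fun t _ => hgnn t
  -- the key integral inequality
  have key : ∀ x, ‖f x‖ ≤ 1 + h x := by
    intro x
    rw [heq x]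
    have hexp : ‖Complex.exp (Complex.I * k * x)‖ = 1 := by
      rw [Complex.norm_exp]
      simp
    calc ‖Complex.exp (Complex.I * k * x) -
        ∫ t in Set.Ici x, ((Real.sin (k * (x - t)) / k : ℝ) : ℂ) * q t * f t‖
        ≤ ‖Complex.exp (Complex.I * k * x)‖ +
          ‖∫ t in Set.Ici x, ((Real.sin (k * (x - t)) / k : ℝ) : ℂ) * q t * f t‖ :=
        norm_sub_le _ _
      _ ≤ 1 + h x := by
        rw [hexp]
        gcongr
        refine (norm_integral_le_integral_norm _).trans ?_
        refine integral_mono_of_nonneg (Filter.Eventually.of_forall fun t => norm_nonneg _)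
          hgInt.integrableOn (Filter.Eventually.of_forall fun t => ?_)
        have hsin : |Real.sin (k * (x - t)) / k| ≤ 1 / |k| := by
          rw [abs_div]
          gcongr
          · exact Real.abs_sin_le_one _
        calc ‖((Real.sin (k * (x - t)) / k : ℝ) : ℂ) * q t * f t‖
            = |Real.sin (k * (x - t)) / k| * ‖q t‖ * ‖f t‖ := by
              rw [norm_mul, norm_mul, Complex.norm_real, Real.norm_eq_abs]
          _ ≤ (1 / |k|) * ‖q t‖ * ‖f t‖ := by gcongr
          _ = g t := by rw [hgdef]; ring
  -- the comparison function
  set φ : ℝ → ℝ := fun y => (1 + h y) * Real.exp (-(Q y)) with hφdef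
  have hφd : ∀ x, HasDerivAt φ (Real.exp (-(Q x)) * ((1 + h x) * p x - g x)) x := by
    intro x
    have hh : HasDerivAt h (-(g x)) x := jost_tail_hasDerivAt hgc hgInt x
    have hQ : HasDerivAt Q (-(p x)) x := jost_tail_hasDerivAt hpc hpInt x
    have hE : HasDerivAt (fun y => Real.exp (-(Q y))) (Real.exp (-(Q x)) * p x) x := by
      have := (hQ.neg).exp
      simpa using this
    have := ((hh.const_add 1).mul hE)
    exact this.congr_deriv (by ring)
  have hgle : ∀ x, g x ≤ (1 + h x) * p x := by
    intro x
    calc g x = ‖q x‖ * ‖f x‖ / |k| := rfl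
      _ ≤ ‖q x‖ * (1 + h x) / |k| := by gcongr; exact key x
      _ = (1 + h x) * p x := by rw [hpdef]; ring
  have hφmono : Monotone φ := by
    refine monotone_of_deriv_nonneg (fun x => (hφd x).differentiableAt) fun x => ?_
    rw [(hφd x).deriv]
    have := hgle x
    have := Real.exp_pos (-(Q x))
    nlinarith
  have hφtend : Tendsto φ atTop (nhds 1) := by
    have h1 : Tendsto h atTop (nhds 0) := jost_tail_tendsto_zero hgInt
    have h2 : Tendsto Q atTop (nhds 0) := jost_tail_tendsto_zero hpInt
    have h3 : Tendsto (fun y => Real.exp (-(Q y))) atTop (nhds (Real.exp (-0))) :=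
      (Real.continuous_exp.tendsto _).comp h2.neg
    have := ((h1.const_add 1).mul h3)
    simpa using this
  have hφle : ∀ x, φ x ≤ 1 := fun x => hφmono.ge_of_tendsto hφtend x
  intro x
  have h1 : 1 + h x ≤ Real.exp (Q x) := by
    have hx := hφle x
    have hmul : Real.exp (-(Q x)) * Real.exp (Q x) = 1 := by
      rw [← Real.exp_add]; simp
    have hx' : (1 + h x) * Real.exp (-(Q x)) ≤ 1 := hx
    have hstep := mul_le_mul_of_nonneg_right hx' (Real.exp_pos (Q x)).le
    calc 1 + h x = (1 + h x) * (Real.exp (-(Q x)) * Real.exp (Q x)) := by rw [hmul, mul_one]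
      _ = (1 + h x) * Real.exp (-(Q x)) * Real.exp (Q x) := by ring
      _ ≤ 1 * Real.exp (Q x) := hstep
      _ = Real.exp (Q x) := one_mul _
  have h2 : Q x ≤ (1 / |k|) * ∫ t : ℝ, ‖q t‖ := by
    have hle : Q x ≤ ∫ t : ℝ, p t :=
      setIntegral_le_integral hpInt (Filter.Eventually.of_forall fun t => hpnn t)
    have : (∫ t : ℝ, p t) = (1 / |k|) * ∫ t : ℝ, ‖q t‖ := by
      rw [hpdef]
      simp only [div_eq_mul_inv]
      rw [integral_mul_const]
      ring
    linarith [hle, this.le, this.ge]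
  calc ‖f x‖ ≤ 1 + h x := key x
    _ ≤ Real.exp (Q x) := h1
    _ ≤ Real.exp ((1 / |k|) * ∫ t : ℝ, ‖q t‖) := Real.exp_le_exp.mpr h2
end

section
/- Let q : ℝ → ℂ be continuous with ∫_ℝ (1+|x|)|q(x)| dx < ∞ and let k be a nonzero real number. Let f₊(k,·) and f₊(−k,·) be the right Jost solutions for k and −k respectively. Then their Wronskian is constant and equals −2ik: for every x ∈ ℝ, f₊(k,x) · (f₊(−k,·))'(x) − (f₊(k,·))'(x) · f₊(−k,x) = −2ik. In particular f₊(k,·) and f₊(−k,·) are linearly independent solutions of −ψ'' + qψ = k²ψ. -/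
open MeasureTheory Filter Topology Set

lemma tail_eq {c : ℝ → ℂ} (hc : Integrable c) (y : ℝ) :
    ∫ t in Set.Ici y, c t
      = ((∫ t, c t) - ∫ t in Set.Iic (0:ℝ), c t) - ∫ t in (0:ℝ)..y, c t := by
  have h1 : (∫ t in Set.Iic y, c t) + ∫ t in Set.Ioi y, c t = ∫ t, c t :=
    intervalIntegral.integral_Iic_add_Ioi hc.integrableOn hc.integrableOn
  have h2 : (∫ t in Set.Iic y, c t) - ∫ t in Set.Iic (0:ℝ), c t = ∫ t in (0:ℝ)..y, c t :=
    intervalIntegral.integral_Iic_sub_Iic hc.integrableOn hc.integrableOn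
  rw [integral_Ici_eq_integral_Ioi]
  linear_combination h1 - h2

lemma tail_hasDerivAt {c : ℝ → ℂ} (hc : Integrable c) (hcc : Continuous c) (x : ℝ) :
    HasDerivAt (fun y => ∫ t in Set.Ici y, c t) (-(c x)) x := by
  have h : HasDerivAt (fun y => ∫ t in (0:ℝ)..y, c t) (c x) x :=
    intervalIntegral.integral_hasDerivAt_right hc.intervalIntegrable
      (hcc.stronglyMeasurableAtFilter _ _) hcc.continuousAt
  have h2 := (hasDerivAt_const x ((∫ t, c t) - ∫ t in Set.Iic (0:ℝ), c t)).sub h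
  simpa only [Pi.sub_def, ← tail_eq hc, zero_sub] using h2

lemma tail_tendsto {c : ℝ → ℂ} (hc : Integrable c) :
    Tendsto (fun y => ∫ t in Set.Ici y, c t) atTop (𝓝 0) := by
  have h := tendsto_setIntegral_of_antitone (μ := volume) (f := c)
    (s := fun y : ℝ => Set.Ici y) (fun i => measurableSet_Ici)
    (fun a b hab => Set.Ici_subset_Ici.mpr hab) ⟨0, hc.integrableOn⟩
  have he : ⋂ y : ℝ, Set.Ici y = (∅ : Set ℝ) := by
    ext z; simp only [Set.mem_iInter, Set.mem_Ici, Set.mem_empty_iff_false, iff_false, not_forall]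
    exact ⟨z + 1, by push_neg; linarith⟩
  rwa [he, Measure.restrict_empty, integral_zero_measure] at h

lemma weight_integrable {q f : ℝ → ℂ} (hq : Continuous q)
    (hq' : Integrable (fun x => (1 + |x|) * ‖q x‖)) (hf : Continuous f)
    {C : ℝ} (hfb : ∀ x, ‖f x‖ ≤ C) (w : ℝ → ℝ) (hw : Continuous w) (hw1 : ∀ t, |w t| ≤ 1) :
    Integrable (fun t => ((w t : ℝ) : ℂ) * (q t * f t)) := by
  refine (hq'.const_mul (max C 0)).mono'
    ((Complex.continuous_ofReal.comp hw).mul (hq.mul hf)).aestronglyMeasurable ?_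
  filter_upwards with t
  have h1 : ‖((w t : ℝ) : ℂ)‖ ≤ 1 := by rw [Complex.norm_real]; exact hw1 t
  have h2 : ‖f t‖ ≤ max C 0 := (hfb t).trans (le_max_left _ _)
  have h3 : (0:ℝ) ≤ ‖q t‖ := norm_nonneg _
  have h4 : (0:ℝ) ≤ |t| := abs_nonneg _
  calc ‖((w t : ℝ) : ℂ) * (q t * f t)‖ = ‖((w t:ℝ):ℂ)‖ * (‖q t‖ * ‖f t‖) := by
        rw [norm_mul, norm_mul]
    _ ≤ 1 * (‖q t‖ * max C 0) :=
        mul_le_mul h1 (mul_le_mul_of_nonneg_left h2 h3) (by positivity) zero_le_one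
    _ ≤ max C 0 * ((1 + |t|) * ‖q t‖) := by
        nlinarith [le_max_right C 0, mul_nonneg (le_max_right C 0) (mul_nonneg h4 h3)]

lemma bdd_mul_tendsto_zero {B u : ℝ → ℂ} {M : ℝ} (hB : ∀ x, ‖B x‖ ≤ M)
    (hu : Tendsto u atTop (𝓝 0)) : Tendsto (fun x => B x * u x) atTop (𝓝 0) := by
  have hg : Tendsto (fun x => M * ‖u x‖) atTop (𝓝 0) := by
    simpa using hu.norm.const_mul M
  exact squeeze_zero_norm
    (fun x => by rw [norm_mul]; exact mul_le_mul_of_nonneg_right (hB x) (norm_nonneg _)) hg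

lemma jost_master (q : ℝ → ℂ) (hq : Continuous q)
    (hq' : Integrable (fun x => (1 + |x|) * ‖q x‖)) (k : ℝ) (hk : k ≠ 0)
    (f : ℝ → ℂ) (hf : Continuous f) (hfb : ∃ C, ∀ x, ‖f x‖ ≤ C)
    (hfeq : ∀ x : ℝ, f x = Complex.exp (Complex.I * (k:ℝ) * x) -
        ∫ t in Set.Ici x, ((Real.sin (k * (x - t)) / k : ℝ) : ℂ) * q t * f t) :
    ∃ d : ℝ → ℂ, (∀ x, HasDerivAt f (d x) x) ∧
      (∀ x, HasDerivAt d (q x * f x - ((k:ℝ):ℂ)^2 * f x) x) ∧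
      Tendsto (fun x => f x - Complex.exp (Complex.I * (k:ℝ) * x)) atTop (𝓝 0) ∧
      Tendsto (fun x => d x - Complex.I * (k:ℝ) * Complex.exp (Complex.I * (k:ℝ) * x))
        atTop (𝓝 0) := by
  obtain ⟨C, hfb⟩ := hfb
  have hc : Integrable (fun t => ((Real.cos (k*t) : ℝ) : ℂ) * (q t * f t)) :=
    weight_integrable hq hq' hf hfb _
      (Real.continuous_cos.comp (continuous_const.mul continuous_id))
      (fun t => Real.abs_cos_le_one _)
  have hs : Integrable (fun t => ((Real.sin (k*t) : ℝ) : ℂ) * (q t * f t)) :=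
    weight_integrable hq hq' hf hfb _
      (Real.continuous_sin.comp (continuous_const.mul continuous_id))
      (fun t => Real.abs_sin_le_one _)
  have hcc : Continuous (fun t => ((Real.cos (k*t) : ℝ) : ℂ) * (q t * f t)) :=
    (Complex.continuous_ofReal.comp
      (Real.continuous_cos.comp (continuous_const.mul continuous_id))).mul (hq.mul hf)
  have hsc : Continuous (fun t => ((Real.sin (k*t) : ℝ) : ℂ) * (q t * f t)) :=
    (Complex.continuous_ofReal.comp
      (Real.continuous_sin.comp (continuous_const.mul continuous_id))).mul (hq.mul hf)
  -- abbreviations as plain defs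
  set F1 : ℝ → ℂ := fun x => ∫ t in Set.Ici x, ((Real.cos (k*t) : ℝ) : ℂ) * (q t * f t) with hF1
  set F2 : ℝ → ℂ := fun x => ∫ t in Set.Ici x, ((Real.sin (k*t) : ℝ) : ℂ) * (q t * f t) with hF2
  have hF1D : ∀ x, HasDerivAt F1 (-(((Real.cos (k*x) : ℝ) : ℂ) * (q x * f x))) x :=
    fun x => tail_hasDerivAt hc hcc x
  have hF2D : ∀ x, HasDerivAt F2 (-(((Real.sin (k*x) : ℝ) : ℂ) * (q x * f x))) x :=
    fun x => tail_hasDerivAt hs hsc x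
  have idf : ∀ x, f x = Complex.exp (Complex.I * (k:ℝ) * x)
      - ((Real.sin (k*x)/k : ℝ) : ℂ) * F1 x + ((Real.cos (k*x)/k : ℝ) : ℂ) * F2 x := by
    intro x
    rw [hfeq x]
    have hpt : ∀ t : ℝ, ((Real.sin (k * (x - t)) / k : ℝ) : ℂ) * q t * f t
        = ((Real.sin (k*x)/k : ℝ):ℂ) * (((Real.cos (k*t) : ℝ) : ℂ) * (q t * f t))
          - ((Real.cos (k*x)/k : ℝ):ℂ) * (((Real.sin (k*t) : ℝ) : ℂ) * (q t * f t)) := by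
      intro t
      have h : Real.sin (k * (x - t))
          = Real.sin (k*x) * Real.cos (k*t) - Real.cos (k*x) * Real.sin (k*t) := by
        rw [mul_sub, Real.sin_sub]
      rw [h]; push_cast; ring
    simp only [hpt]
    rw [integral_sub ((hc.const_mul _).integrableOn) ((hs.const_mul _).integrableOn),
      integral_const_mul, integral_const_mul]
    rw [hF1, hF2]; ring
  -- coefficient derivatives
  have hkmul : ∀ x : ℝ, HasDerivAt (fun x : ℝ => k * x) k x := by
    intro x; simpa using (hasDerivAt_id x).const_mul k
  have hsinD : ∀ x, HasDerivAt (fun x => ((Real.sin (k*x)/k : ℝ):ℂ))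
      (((Real.cos (k*x) : ℝ)):ℂ) x := by
    intro x
    have h1 := ((Real.hasDerivAt_sin (k*x)).comp x (hkmul x)).div_const k
    have h2 : Real.cos (k*x) * k / k = Real.cos (k*x) := by
      field_simp
    rw [h2] at h1
    exact h1.ofReal_comp
  have hcosD : ∀ x, HasDerivAt (fun x => ((Real.cos (k*x)/k : ℝ):ℂ))
      (((-Real.sin (k*x) : ℝ)):ℂ) x := by
    intro x
    have h1 := ((Real.hasDerivAt_cos (k*x)).comp x (hkmul x)).div_const k
    have h2 : -Real.sin (k*x) * k / k = -Real.sin (k*x) := by field_simp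
    rw [h2] at h1
    exact h1.ofReal_comp
  have hsinD2 : ∀ x, HasDerivAt (fun x => ((Real.sin (k*x) : ℝ):ℂ))
      (((Real.cos (k*x) * k : ℝ)):ℂ) x := by
    intro x
    exact ((Real.hasDerivAt_sin (k*x)).comp x (hkmul x)).ofReal_comp
  have hcosD2 : ∀ x, HasDerivAt (fun x => ((Real.cos (k*x) : ℝ):ℂ))
      (((-Real.sin (k*x) * k : ℝ)):ℂ) x := by
    intro x
    exact ((Real.hasDerivAt_cos (k*x)).comp x (hkmul x)).ofReal_comp
  have hED : ∀ x : ℝ, HasDerivAt (fun x : ℝ => Complex.exp (Complex.I * (k:ℝ) * x))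
      (Complex.I * (k:ℝ) * Complex.exp (Complex.I * (k:ℝ) * x)) x := by
    intro x
    have h0 : HasDerivAt (fun z : ℂ => Complex.I * (k:ℝ) * z) (Complex.I * (k:ℝ)) x := by
      simpa using (hasDerivAt_id (x:ℂ)).const_mul (Complex.I * (k:ℝ))
    have h1 := h0.cexp.comp_ofReal
    exact h1.congr_deriv (by ring)
  have hkc : ((k:ℝ):ℂ) ≠ 0 := Complex.ofReal_ne_zero.mpr hk
  refine ⟨fun x => Complex.I * (k:ℝ) * Complex.exp (Complex.I * (k:ℝ) * x)
      - ((Real.cos (k*x) : ℝ):ℂ) * F1 x - ((Real.sin (k*x) : ℝ):ℂ) * F2 x, ?_, ?_, ?_, ?_⟩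
  · intro x
    have h := (((hED x).sub ((hsinD x).mul (hF1D x))).add ((hcosD x).mul (hF2D x)))
    have hfun : (fun x : ℝ => Complex.exp (Complex.I * (k:ℝ) * x)
        - ((Real.sin (k*x)/k : ℝ):ℂ) * F1 x + ((Real.cos (k*x)/k : ℝ):ℂ) * F2 x) = f :=
      funext fun y => (idf y).symm
    simp only [Pi.add_def, Pi.sub_def, Pi.mul_def] at h
    rw [hfun] at h
    refine h.congr_deriv ?_
    push_cast
    ring
  · intro x
    have h := (((hED x).const_mul (Complex.I * (k:ℝ))).sub ((hcosD2 x).mul (hF1D x))).sub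
      ((hsinD2 x).mul (hF2D x))
    refine h.congr_deriv ?_
    have pyth : ((Real.cos (k*x) : ℝ):ℂ)^2 + ((Real.sin (k*x) : ℝ):ℂ)^2 = 1 := by
      norm_cast
      exact Real.cos_sq_add_sin_sq _
    have idx : ((k:ℝ):ℂ) * f x = ((k:ℝ):ℂ) * Complex.exp (Complex.I * (k:ℝ) * x)
        - ((Real.sin (k*x) : ℝ):ℂ) * F1 x + ((Real.cos (k*x) : ℝ):ℂ) * F2 x := by
      rw [idf x]
      push_cast
      field_simp
    push_cast at pyth idx ⊢
    linear_combination ((k:ℝ):ℂ) * idx + (q x * f x) * pyth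
      + ((k:ℝ):ℂ)^2 * Complex.exp (Complex.I * (k:ℝ) * x) * Complex.I_sq
  · have heq : ∀ x, (-((Real.sin (k*x)/k : ℝ):ℂ)) * F1 x + ((Real.cos (k*x)/k : ℝ):ℂ) * F2 x
        = f x - Complex.exp (Complex.I * (k:ℝ) * x) := by
      intro x; rw [idf x]; ring
    have h1 : Tendsto (fun x => (-((Real.sin (k*x)/k : ℝ):ℂ)) * F1 x) atTop (𝓝 0) := by
      refine bdd_mul_tendsto_zero (M := |k|⁻¹) (fun x => ?_) (tail_tendsto hc)
      rw [norm_neg, Complex.norm_real, Real.norm_eq_abs, abs_div, ← one_div]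
      exact (div_le_div_iff_of_pos_right (abs_pos.mpr hk)).mpr (Real.abs_sin_le_one _)
    have h2 : Tendsto (fun x => ((Real.cos (k*x)/k : ℝ):ℂ) * F2 x) atTop (𝓝 0) := by
      refine bdd_mul_tendsto_zero (M := |k|⁻¹) (fun x => ?_) (tail_tendsto hs)
      rw [Complex.norm_real, Real.norm_eq_abs, abs_div, ← one_div]
      exact (div_le_div_iff_of_pos_right (abs_pos.mpr hk)).mpr (Real.abs_cos_le_one _)
    simpa using (h1.add h2).congr heq
  · have heq : ∀ x, (-((Real.cos (k*x) : ℝ):ℂ)) * F1 x + (-((Real.sin (k*x) : ℝ):ℂ)) * F2 x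
        = (Complex.I * (k:ℝ) * Complex.exp (Complex.I * (k:ℝ) * x)
          - ((Real.cos (k*x) : ℝ):ℂ) * F1 x - ((Real.sin (k*x) : ℝ):ℂ) * F2 x)
          - Complex.I * (k:ℝ) * Complex.exp (Complex.I * (k:ℝ) * x) := by
      intro x; ring
    have h1 : Tendsto (fun x => (-((Real.cos (k*x) : ℝ):ℂ)) * F1 x) atTop (𝓝 0) := by
      refine bdd_mul_tendsto_zero (M := 1) (fun x => ?_) (tail_tendsto hc)
      rw [norm_neg, Complex.norm_real, Real.norm_eq_abs]
      exact Real.abs_cos_le_one _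
    have h2 : Tendsto (fun x => (-((Real.sin (k*x) : ℝ):ℂ)) * F2 x) atTop (𝓝 0) := by
      refine bdd_mul_tendsto_zero (M := 1) (fun x => ?_) (tail_tendsto hs)
      rw [norm_neg, Complex.norm_real, Real.norm_eq_abs]
      exact Real.abs_sin_le_one _
    simpa using (h1.add h2).congr heq

/-- The Wronskian of the right Jost solutions `f₊(k,·)` and `f₊(−k,·)` is the constant
`−2ik`; in particular they are linearly independent solutions of `−ψ'' + qψ = k²ψ`. -/
theorem wronskian_jost_solutions (q : ℝ → ℂ) (hq : Continuous q)
    (hq' : Integrable (fun x => (1 + |x|) * ‖q x‖)) (k : ℝ) (hk : k ≠ 0)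
    (fp fm : ℝ → ℂ)
    (hfp : Continuous fp) (hfpb : ∃ C : ℝ, ∀ x, ‖fp x‖ ≤ C)
    (hfpeq : ∀ x : ℝ, fp x = Complex.exp (Complex.I * k * x) -
        ∫ t in Set.Ici x, ((Real.sin (k * (x - t)) / k : ℝ) : ℂ) * q t * fp t)
    (hfm : Continuous fm) (hfmb : ∃ C : ℝ, ∀ x, ‖fm x‖ ≤ C)
    (hfmeq : ∀ x : ℝ, fm x = Complex.exp (Complex.I * (-k) * x) -
        ∫ t in Set.Ici x, ((Real.sin ((-k) * (x - t)) / (-k) : ℝ) : ℂ) * q t * fm t) :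
    ∀ x : ℝ, fp x * deriv fm x - deriv fp x * fm x = -(2 * Complex.I * k) := by
  obtain ⟨dp, hdp1, hdp2, hdp3, hdp4⟩ := jost_master q hq hq' k hk fp hfp hfpb hfpeq
  obtain ⟨dm, hdm1, hdm2, hdm3, hdm4⟩ := jost_master q hq hq' (-k) (neg_ne_zero.mpr hk)
    fm hfm hfmb (by
      intro x
      rw [hfmeq x]
      norm_num)
  obtain ⟨Cp, hCp⟩ := hfpb
  obtain ⟨Cm, hCm⟩ := hfmb
  set W : ℝ → ℂ := fun x => fp x * dm x - dp x * fm x with hWdef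
  have hW : ∀ x, HasDerivAt W 0 x := by
    intro x
    have h := ((hdp1 x).mul (hdm2 x)).sub ((hdp2 x).mul (hdm1 x))
    refine h.congr_deriv ?_
    push_cast
    ring
  have hconst : ∀ a b : ℝ, W a = W b :=
    fun a b => is_const_of_deriv_eq_zero (fun x => (hW x).differentiableAt)
      (fun x => (hW x).deriv) a b
  have hEE : ∀ x : ℝ, Complex.exp (Complex.I * (k:ℝ) * x)
      * Complex.exp (Complex.I * ((-k:ℝ):ℂ) * x) = 1 := by
    intro x
    rw [← Complex.exp_add, show Complex.I * (k:ℝ) * x + Complex.I * ((-k:ℝ):ℂ) * x = 0 by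
      push_cast; ring, Complex.exp_zero]
  have hnormE : ∀ (a : ℝ) (x : ℝ), ‖Complex.exp (Complex.I * (a:ℝ) * x)‖ = 1 := by
    intro a x
    rw [Complex.norm_exp]
    have : (Complex.I * (a:ℝ) * x).re = 0 := by simp
    rw [this, Real.exp_zero]
  have hdecomp : ∀ x, W x - (-(2 * Complex.I * (k:ℝ))) =
      fp x * (dm x - Complex.I * ((-k:ℝ):ℂ) * Complex.exp (Complex.I * ((-k:ℝ):ℂ) * x))
      + (-(Complex.I * (k:ℝ) * Complex.exp (Complex.I * ((-k:ℝ):ℂ) * x)))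
          * (fp x - Complex.exp (Complex.I * (k:ℝ) * x))
      + (-(fm x)) * (dp x - Complex.I * (k:ℝ) * Complex.exp (Complex.I * (k:ℝ) * x))
      + (-(Complex.I * (k:ℝ) * Complex.exp (Complex.I * (k:ℝ) * x)))
          * (fm x - Complex.exp (Complex.I * ((-k:ℝ):ℂ) * x)) := by
    intro x
    have h := hEE x
    push_cast at h ⊢
    linear_combination (-(2 * Complex.I * (k:ℂ))) * h
  have t1 : Tendsto (fun x : ℝ => fp x
      * (dm x - Complex.I * ((-k:ℝ):ℂ) * Complex.exp (Complex.I * ((-k:ℝ):ℂ) * x)))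
      atTop (𝓝 0) := bdd_mul_tendsto_zero hCp hdm4
  have t2 : Tendsto (fun x : ℝ => (-(Complex.I * (k:ℝ) * Complex.exp (Complex.I * ((-k:ℝ):ℂ) * x)))
      * (fp x - Complex.exp (Complex.I * (k:ℝ) * x))) atTop (𝓝 0) := by
    refine bdd_mul_tendsto_zero (M := |k|) (fun x => ?_) hdp3
    rw [norm_neg, norm_mul, norm_mul, hnormE (-k) x, Complex.norm_I, Complex.norm_real,
      Real.norm_eq_abs]
    simp
  have t3 : Tendsto (fun x : ℝ => (-(fm x))
      * (dp x - Complex.I * (k:ℝ) * Complex.exp (Complex.I * (k:ℝ) * x))) atTop (𝓝 0) := by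
    refine bdd_mul_tendsto_zero (M := Cm) (fun x => ?_) hdp4
    rw [norm_neg]; exact hCm x
  have t4 : Tendsto (fun x : ℝ => (-(Complex.I * (k:ℝ) * Complex.exp (Complex.I * (k:ℝ) * x)))
      * (fm x - Complex.exp (Complex.I * ((-k:ℝ):ℂ) * x))) atTop (𝓝 0) := by
    refine bdd_mul_tendsto_zero (M := |k|) (fun x => ?_) hdm3
    rw [norm_neg, norm_mul, norm_mul, hnormE k x, Complex.norm_I, Complex.norm_real,
      Real.norm_eq_abs]
    simp
  have hlim0 : Tendsto (fun x => W x - (-(2 * Complex.I * (k:ℝ)))) atTop (𝓝 0) := by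
    have := ((t1.add t2).add t3).add t4
    simpa using this.congr (fun x => (hdecomp x).symm)
  have hlim : Tendsto W atTop (𝓝 (-(2 * Complex.I * (k:ℝ)))) := by
    have hc2 : Tendsto (fun _ : ℝ => -(2 * Complex.I * ((k:ℝ):ℂ))) atTop
        (𝓝 (-(2 * Complex.I * ((k:ℝ):ℂ)))) := tendsto_const_nhds
    have := hlim0.add hc2
    simpa using this
  intro x
  have hWx : W x = -(2 * Complex.I * (k:ℝ)) := by
    have hcw : W = fun _ => W x := funext fun y => hconst y x
    rw [hcw] at hlim
    exact tendsto_nhds_unique tendsto_const_nhds hlim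
  rw [(hdm1 x).deriv, (hdp1 x).deriv]
  exact hWx
end

section
/- (Theorem 2, first relation.) Let q : ℝ → ℂ be continuous with ∫_ℝ (1+|x|)|q(x)| dx < ∞ and let k be a nonzero real number. Let f₊(k,·), f₊(−k,·) be the right Jost solutions for k and −k, and let f₋(k,·) be the left Jost solution for k. Then there exists a unique pair of complex constants (c₁, c₂) such that f₋(k,x) = c₁ · f₊(k,x) + c₂ · f₊(−k,x) for all x ∈ ℝ. (These constants are the scattering coefficients: the relation s₂₂ f₋ = s₂₁ f₊ + f₊(−k,·) after normalization.) -/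
open MeasureTheory Filter

lemma jost_qnorm_int {q : ℝ → ℂ} (hq : Continuous q)
    (hq' : Integrable (fun x => (1 + |x|) * ‖q x‖)) :
    Integrable (fun x => ‖q x‖) := by
  refine hq'.mono' hq.norm.aestronglyMeasurable ?_
  filter_upwards with x
  have h1 : (0:ℝ) ≤ |x| := abs_nonneg x
  have h2 : (0:ℝ) ≤ ‖q x‖ := norm_nonneg _
  simp only [Real.norm_eq_abs, abs_of_nonneg h2]
  nlinarith

lemma jost_ker_norm {k : ℝ} (hk : k ≠ 0) (u : ℝ) {q : ℝ → ℂ} {f : ℝ → ℂ} {c : ℝ}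
    (hfb : ∀ t, ‖f t‖ ≤ c) (t : ℝ) :
    ‖((Real.sin u / k : ℝ) : ℂ) * q t * f t‖ ≤ c / |k| * ‖q t‖ := by
  have hc : (0:ℝ) ≤ c := le_trans (norm_nonneg _) (hfb t)
  have hkp : (0:ℝ) < |k| := abs_pos.2 hk
  have h1 : ‖((Real.sin u / k : ℝ) : ℂ)‖ ≤ 1 / |k| := by
    rw [Complex.norm_real, Real.norm_eq_abs, abs_div]
    gcongr
    exact Real.abs_sin_le_one u
  calc ‖((Real.sin u / k : ℝ) : ℂ) * q t * f t‖
      = ‖((Real.sin u / k : ℝ) : ℂ)‖ * ‖q t‖ * ‖f t‖ := by simp [norm_mul]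
    _ ≤ (1/|k|) * ‖q t‖ * c := by
        exact mul_le_mul (mul_le_mul_of_nonneg_right h1 (norm_nonneg _)) (hfb t)
          (norm_nonneg _) (by positivity)
    _ = c / |k| * ‖q t‖ := by ring

lemma jost_ker_int {q : ℝ → ℂ} (hq : Continuous q) (hqn : Integrable (fun x => ‖q x‖))
    {k : ℝ} (hk : k ≠ 0) {f : ℝ → ℂ} (hf : Continuous f) {c : ℝ}
    (hfb : ∀ t, ‖f t‖ ≤ c) (x : ℝ) :
    Integrable (fun t => ((Real.sin (k * (x - t)) / k : ℝ) : ℂ) * q t * f t) := by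
  refine (hqn.const_mul (c / |k|)).mono' ?_ ?_
  · apply Continuous.aestronglyMeasurable
    fun_prop
  · filter_upwards with t
    exact jost_ker_norm hk _ hfb t

lemma jost_int_norm_le {q : ℝ → ℂ} (hq : Continuous q) (hqn : Integrable (fun x => ‖q x‖))
    {k : ℝ} (hk : k ≠ 0) {f : ℝ → ℂ} (hf : Continuous f) {c : ℝ}
    (hfb : ∀ t, ‖f t‖ ≤ c) (x : ℝ) :
    ‖∫ t in Set.Ici x, ((Real.sin (k * (x - t)) / k : ℝ) : ℂ) * q t * f t‖
      ≤ c / |k| * ∫ t in Set.Ici x, ‖q t‖ := by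
  calc ‖∫ t in Set.Ici x, ((Real.sin (k * (x - t)) / k : ℝ) : ℂ) * q t * f t‖
      ≤ ∫ t in Set.Ici x, ‖((Real.sin (k * (x - t)) / k : ℝ) : ℂ) * q t * f t‖ :=
        norm_integral_le_integral_norm _
    _ ≤ ∫ t in Set.Ici x, c / |k| * ‖q t‖ := by
        refine setIntegral_mono_on ((jost_ker_int hq hqn hk hf hfb x).norm.integrableOn)
          ((hqn.const_mul _).integrableOn) measurableSet_Ici ?_
        intro t _
        exact jost_ker_norm hk _ hfb t
    _ = c / |k| * ∫ t in Set.Ici x, ‖q t‖ := integral_const_mul _ _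

lemma jost_tail_anti {q : ℝ → ℂ} (hqn : Integrable (fun x => ‖q x‖)) :
    Antitone (fun x => ∫ t in Set.Ici x, ‖q t‖) := by
  intro a b hab
  refine setIntegral_mono_set hqn.integrableOn ?_ ?_
  · filter_upwards with t using norm_nonneg _
  · exact HasSubset.Subset.eventuallyLE (Set.Ici_subset_Ici.2 hab)

lemma jost_tail_nonneg {q : ℝ → ℂ} (x : ℝ) : 0 ≤ ∫ t in Set.Ici x, ‖q t‖ :=
  setIntegral_nonneg measurableSet_Ici fun _ _ => norm_nonneg _

lemma jost_tail_small {q : ℝ → ℂ} (hqn : Integrable (fun x => ‖q x‖)) {ε : ℝ} (hε : 0 < ε) :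
    ∃ x₀ : ℝ, (∫ t in Set.Ici x₀, ‖q t‖) < ε := by
  have hmeas : ∀ n : ℕ, MeasurableSet (Set.Ici (n : ℝ)) := fun n => measurableSet_Ici
  have hanti : Antitone (fun n : ℕ => Set.Ici (n : ℝ)) := fun m n hmn =>
    Set.Ici_subset_Ici.2 (by exact_mod_cast hmn)
  have hint : ∃ n : ℕ, IntegrableOn (fun t => ‖q t‖) (Set.Ici ((n : ℕ) : ℝ)) volume :=
    ⟨0, hqn.integrableOn⟩
  have htend := tendsto_setIntegral_of_antitone hmeas hanti hint
  have hempty : (⋂ n : ℕ, Set.Ici ((n : ℕ) : ℝ)) = ∅ := by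
    ext y
    simp only [Set.mem_iInter, Set.mem_Ici, Set.mem_empty_iff_false, iff_false, not_forall,
      not_le]
    obtain ⟨n, hn⟩ := exists_nat_gt y
    exact ⟨n, hn⟩
  rw [hempty] at htend
  simp only [Measure.restrict_empty, integral_zero_measure] at htend
  have hev := htend.eventually_lt_const hε
  obtain ⟨n, hn⟩ := hev.exists
  exact ⟨(n : ℝ), hn⟩

lemma jost_volterra {q : ℝ → ℂ} (hq : Continuous q) (hqn : Integrable (fun x => ‖q x‖))
    {k : ℝ} (hk : k ≠ 0) {h : ℝ → ℂ} (hh : Continuous h) {M : ℝ} (hhb : ∀ x, ‖h x‖ ≤ M)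
    (heq : ∀ x, h x = -∫ t in Set.Ici x, ((Real.sin (k * (x - t)) / k : ℝ) : ℂ) * q t * h t) :
    ∀ x, h x = 0 := by
  have hkp : (0:ℝ) < |k| := abs_pos.2 hk
  have hM0 : (0:ℝ) ≤ M := le_trans (norm_nonneg _) (hhb 0)
  set T : ℝ → ℝ := fun x => ∫ t in Set.Ici x, ‖q t‖ with hT
  obtain ⟨x₀, hx₀⟩ := jost_tail_small hqn (half_pos hkp)
  -- Step B : vanishing on [x₀, ∞)
  have claim1 : ∀ n : ℕ, ∀ x, x₀ ≤ x → ‖h x‖ ≤ M / 2 ^ n := by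
    intro n
    induction n with
    | zero => intro x _; simpa using hhb x
    | succ n ih =>
      intro x hx
      rw [heq x, norm_neg]
      have hb1 : ‖∫ t in Set.Ici x, ((Real.sin (k * (x - t)) / k : ℝ) : ℂ) * q t * h t‖
          ≤ ∫ t in Set.Ici x, (M / 2 ^ n) / |k| * ‖q t‖ := by
        refine le_trans (norm_integral_le_integral_norm _) ?_
        refine setIntegral_mono_on ((jost_ker_int hq hqn hk hh hhb x).norm.integrableOn)
          ((hqn.const_mul _).integrableOn) measurableSet_Ici ?_
        intro t ht
        have hker : ‖((Real.sin (k * (x - t)) / k : ℝ) : ℂ)‖ ≤ 1 / |k| := by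
          rw [Complex.norm_real, Real.norm_eq_abs, abs_div]
          gcongr
          exact Real.abs_sin_le_one _
        calc ‖((Real.sin (k * (x - t)) / k : ℝ) : ℂ) * q t * h t‖
            = ‖((Real.sin (k * (x - t)) / k : ℝ) : ℂ)‖ * ‖q t‖ * ‖h t‖ := by simp [norm_mul]
          _ ≤ (1 / |k|) * ‖q t‖ * (M / 2 ^ n) := by
              refine mul_le_mul (mul_le_mul_of_nonneg_right hker (norm_nonneg _))
                (ih t (le_trans hx ht)) (norm_nonneg _) (by positivity)
          _ = (M / 2 ^ n) / |k| * ‖q t‖ := by ring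
      have hb2 : (∫ t in Set.Ici x, (M / 2 ^ n) / |k| * ‖q t‖) = (M / 2 ^ n) / |k| * T x :=
        integral_const_mul _ _
      have hTx : T x ≤ |k| / 2 := le_trans (jost_tail_anti hqn hx) hx₀.le
      have : (M / 2 ^ n) / |k| * T x ≤ (M / 2 ^ n) / |k| * (|k| / 2) := by
        refine mul_le_mul_of_nonneg_left hTx (by positivity)
      calc ‖∫ t in Set.Ici x, ((Real.sin (k * (x - t)) / k : ℝ) : ℂ) * q t * h t‖
          ≤ (M / 2 ^ n) / |k| * T x := by rw [← hb2]; exact hb1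
        _ ≤ (M / 2 ^ n) / |k| * (|k| / 2) := this
        _ = M / 2 ^ (n + 1) := by field_simp; ring
  have hB : ∀ x, x₀ ≤ x → h x = 0 := by
    intro x hx
    have htend : Tendsto (fun n : ℕ => M / 2 ^ n) atTop (nhds 0) := by
      have h1 := tendsto_pow_atTop_nhds_zero_of_lt_one (by norm_num : (0:ℝ) ≤ 1/2)
        (by norm_num : (1:ℝ)/2 < 1)
      have h2 := h1.const_mul M
      rw [mul_zero] at h2
      refine h2.congr fun n => ?_
      rw [one_div, inv_pow, ← div_eq_mul_inv]
    have : ‖h x‖ ≤ 0 := ge_of_tendsto' htend (fun n => claim1 n x hx)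
    exact norm_le_zero_iff.1 this
  -- Step C : backwards propagation
  intro w
  rcases le_total x₀ w with hw | hw
  · exact hB w hw
  obtain ⟨Bq, hBq⟩ := (isCompact_Icc (a := w) (b := x₀)).exists_bound_of_continuousOn
    hq.continuousOn
  have hBq0 : 0 ≤ Bq := le_trans (norm_nonneg _) (hBq w ⟨le_refl w, hw⟩)
  set δ : ℝ := |k| / (2 * (Bq + 1)) with hδdef
  have hδ : 0 < δ := by positivity
  have claim2 : ∀ n : ℕ, ∀ y, w ≤ y → x₀ - n * δ ≤ y → h y = 0 := by
    intro n
    induction n with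
    | zero => intro y _ hy; exact hB y (by simpa using hy)
    | succ n ih =>
      intro y hwy hy
      by_cases hcase : x₀ - n * δ ≤ y
      · exact ih y hwy hcase
      push_neg at hcase
      set z : ℝ := x₀ - n * δ with hzdef
      have hyz : y < z := hcase
      have hz₀ : z ≤ x₀ := by
        have : (0:ℝ) ≤ n * δ := by positivity
        simp [hzdef]; linarith
      have hzy : z - y ≤ δ := by
        have : x₀ - (n + 1 : ℕ) * δ ≤ y := hy
        push_cast at this
        simp only [hzdef]
        nlinarith
      have hvanish : ∀ t, z ≤ t → h t = 0 := fun t ht =>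
        ih t (le_trans (le_of_lt (lt_of_le_of_lt hwy hyz)) ht) ht
      obtain ⟨ys, hys, hmax⟩ := (isCompact_Icc (a := y) (b := z)).exists_isMaxOn
        ⟨y, le_refl y, hyz.le⟩ hh.norm.continuousOn
      set m : ℝ := ‖h ys‖ with hmdef
      have hm0 : 0 ≤ m := norm_nonneg _
      have key : ∀ y' ∈ Set.Icc y z, ‖h y'‖ ≤ 1 / 2 * m := by
        intro y' hy'
        rw [heq y', norm_neg]
        have hsplit : Set.Ici y' = Set.Ico y' z ∪ Set.Ici z :=
          (Set.Ico_union_Ici_eq_Ici hy'.2).symm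
        have hint : Integrable (fun t => ((Real.sin (k * (y' - t)) / k : ℝ) : ℂ) * q t * h t) :=
          jost_ker_int hq hqn hk hh hhb y'
        have hdisj : Disjoint (Set.Ico y' z) (Set.Ici z) := by
          apply Set.disjoint_left.2
          rintro t ⟨_, h2⟩ h3
          exact absurd h3 (not_le.2 h2)
        rw [hsplit, setIntegral_union hdisj measurableSet_Ici
          hint.integrableOn hint.integrableOn]
        have hz0 : (∫ t in Set.Ici z, ((Real.sin (k * (y' - t)) / k : ℝ) : ℂ) * q t * h t) = 0 :=
          setIntegral_eq_zero_of_forall_eq_zero fun t ht => by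
            rw [hvanish t ht, mul_zero]
        rw [hz0, add_zero]
        have hbound : ∀ t ∈ Set.Ico y' z,
            ‖((Real.sin (k * (y' - t)) / k : ℝ) : ℂ) * q t * h t‖ ≤ Bq * m / |k| := by
          intro t ht
          have htq : ‖q t‖ ≤ Bq := hBq t ⟨le_trans hwy (le_trans hy'.1 ht.1), le_trans ht.2.le hz₀⟩
          have hth : ‖h t‖ ≤ m := hmax ⟨le_trans hy'.1 ht.1, ht.2.le⟩
          have hker : ‖((Real.sin (k * (y' - t)) / k : ℝ) : ℂ)‖ ≤ 1 / |k| := by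
            rw [Complex.norm_real, Real.norm_eq_abs, abs_div]
            gcongr
            exact Real.abs_sin_le_one _
          calc ‖((Real.sin (k * (y' - t)) / k : ℝ) : ℂ) * q t * h t‖
              = ‖((Real.sin (k * (y' - t)) / k : ℝ) : ℂ)‖ * ‖q t‖ * ‖h t‖ := by simp [norm_mul]
            _ ≤ (1 / |k|) * Bq * m := by
                refine mul_le_mul (mul_le_mul hker htq (norm_nonneg _) (by positivity)) hth
                  (norm_nonneg _) (by positivity)
            _ = Bq * m / |k| := by ring
        have hvol : volume (Set.Ico y' z) < ⊤ := by
          rw [Real.volume_Ico]; exact ENNReal.ofReal_lt_top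
        have := norm_setIntegral_le_of_norm_le_const hvol hbound
        rw [measureReal_def, Real.volume_Ico, ENNReal.toReal_ofReal (by linarith [hy'.2] : (0:ℝ) ≤ z - y')] at this
        refine le_trans this ?_
        have h1 : z - y' ≤ δ := by linarith [hy'.1]
        have h2 : Bq * m / |k| * (z - y') ≤ Bq * m / |k| * δ := by
          refine mul_le_mul_of_nonneg_left h1 (by positivity)
        refine le_trans h2 ?_
        rw [hδdef]
        rw [show Bq * m / |k| * (|k| / (2 * (Bq + 1))) = Bq * m / (2 * (Bq + 1)) by
          field_simp]
        rw [div_le_iff₀ (by positivity)]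
        nlinarith
      have hmzero : m = 0 := by
        have := key ys hys
        linarith
      have hle : ‖h y‖ ≤ ‖h ys‖ := hmax ⟨le_refl y, hyz.le⟩
      rw [← hmdef, hmzero] at hle
      exact norm_le_zero_iff.1 hle
  obtain ⟨n, hn⟩ := exists_nat_ge ((x₀ - w) / δ)
  refine claim2 n w (le_refl w) ?_
  rw [div_le_iff₀ hδ] at hn
  linarith


lemma jost_exp_sq {k : ℝ} (hk : k ≠ 0) (x : ℝ) :
    Complex.exp (Complex.I * k * ((x + Real.pi / (2 * |k|) : ℝ) : ℂ)) ^ 2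
      = -(Complex.exp (Complex.I * k * x)) ^ 2 := by
  have hk' : (k:ℂ) ≠ 0 := by exact_mod_cast hk
  rw [← Complex.exp_nat_mul, ← Complex.exp_nat_mul]
  rcases hk.lt_or_gt with hneg | hpos
  · have habs : |k| = -k := abs_of_neg hneg
    have hexp : ((2:ℕ):ℂ) * (Complex.I * k * ((x + Real.pi / (2 * |k|) : ℝ) : ℂ))
        = ((2:ℕ):ℂ) * (Complex.I * k * x) + (-(Real.pi:ℂ)) * Complex.I := by
      rw [habs]
      push_cast
      field_simp
    rw [hexp, Complex.exp_add, neg_mul, Complex.exp_neg, Complex.exp_pi_mul_I]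
    norm_num
  · have habs : |k| = k := abs_of_pos hpos
    have hexp : ((2:ℕ):ℂ) * (Complex.I * k * ((x + Real.pi / (2 * |k|) : ℝ) : ℂ))
        = ((2:ℕ):ℂ) * (Complex.I * k * x) + (Real.pi:ℂ) * Complex.I := by
      rw [habs]
      push_cast
      field_simp
    rw [hexp, Complex.exp_add, Complex.exp_pi_mul_I]
    ring

lemma jost_abs_exp {k : ℝ} (y : ℝ) : ‖Complex.exp (Complex.I * k * y)‖ = 1 := by
  rw [show Complex.I*(k:ℂ)*(y:ℂ) = ((k*y : ℝ):ℂ)*Complex.I by push_cast; ring]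
  exact Complex.norm_exp_ofReal_mul_I _

lemma jost_abs_exp' {k : ℝ} (y : ℝ) : ‖Complex.exp (-(Complex.I * k * y))‖ = 1 := by
  rw [show -(Complex.I*(k:ℂ)*(y:ℂ)) = ((-(k*y) : ℝ):ℂ)*Complex.I by push_cast; ring]
  exact Complex.norm_exp_ofReal_mul_I _

lemma jost_indep {k : ℝ} (hk : k ≠ 0) {T : ℝ → ℝ} (hT0 : ∀ x, 0 ≤ T x)
    (hTanti : Antitone T) (hTsmall : ∀ ε : ℝ, 0 < ε → ∃ x, T x < ε)
    {fpk fpmk : ℝ → ℂ} {Cp Cpm : ℝ} (hCp : 0 ≤ Cp) (hCpm : 0 ≤ Cpm)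
    (hasymp : ∀ x : ℝ, ‖fpk x - Complex.exp (Complex.I * k * x)‖ ≤ Cp * T x)
    (hasymp' : ∀ x : ℝ, ‖fpmk x - Complex.exp (-(Complex.I * k * x))‖ ≤ Cpm * T x)
    (d₁ d₂ : ℂ) (hzero : ∀ x, d₁ * fpk x + d₂ * fpmk x = 0) : d₁ = 0 ∧ d₂ = 0 := by
  set E : ℝ → ℂ := fun y => Complex.exp (Complex.I * k * y) with hE
  set E' : ℝ → ℂ := fun y => Complex.exp (-(Complex.I * k * y)) with hE'
  set C : ℝ := ‖d₁‖ * Cp + ‖d₂‖ * Cpm with hC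
  have hC0 : 0 ≤ C := by positivity
  have hg : ∀ x, ‖d₁ * E x + d₂ * E' x‖ ≤ C * T x := by
    intro x
    have hz := hzero x
    have hrw : d₁ * E x + d₂ * E' x = -(d₁ * (fpk x - E x) + d₂ * (fpmk x - E' x)) := by
      linear_combination hz
    rw [hrw, norm_neg]
    calc ‖d₁ * (fpk x - E x) + d₂ * (fpmk x - E' x)‖
        ≤ ‖d₁‖ * ‖fpk x - E x‖ + ‖d₂‖ * ‖fpmk x - E' x‖ := by
          refine le_trans (norm_add_le _ _) ?_
          rw [norm_mul, norm_mul]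
      _ ≤ ‖d₁‖ * (Cp * T x) + ‖d₂‖ * (Cpm * T x) := by
          gcongr
          · exact hasymp x
          · exact hasymp' x
      _ = C * T x := by rw [hC]; ring
  have hprod : ∀ y : ℝ, E y * E' y = 1 := by
    intro y
    rw [hE, hE']
    rw [← Complex.exp_add, show Complex.I*(k:ℂ)*(y:ℂ) + -(Complex.I*(k:ℂ)*(y:ℂ)) = 0 by ring,
      Complex.exp_zero]
  have hd₁ : d₁ = 0 := by
    have key : ∀ x : ℝ, 2 * ‖d₁‖ ≤ 2 * C * T x := by
      intro x
      set x' : ℝ := x + Real.pi / (2 * |k|) with hx'def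
      have hxx' : x ≤ x' := by
        rw [hx'def]
        have : (0:ℝ) < Real.pi / (2*|k|) := by positivity
        linarith
      have hsq : (E x') ^ 2 = -(E x) ^ 2 := jost_exp_sq hk x
      have hid : (d₁ * E x + d₂ * E' x) * E x - (d₁ * E x' + d₂ * E' x') * E x'
          = 2 * d₁ * (E x) ^ 2 := by
        have h1 := hprod x
        have h2 := hprod x'
        linear_combination d₂ * h1 - d₂ * h2 - d₁ * hsq
      have habs : ‖E x‖ = 1 := jost_abs_exp x
      have habs' : ‖E x'‖ = 1 := jost_abs_exp x'
      calc 2 * ‖d₁‖ = ‖2 * d₁ * (E x) ^ 2‖ := by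
            rw [norm_mul, norm_mul, norm_pow, habs]
            norm_num
        _ = ‖(d₁ * E x + d₂ * E' x) * E x - (d₁ * E x' + d₂ * E' x') * E x'‖ := by rw [hid]
        _ ≤ ‖(d₁ * E x + d₂ * E' x)‖ * ‖E x‖ + ‖(d₁ * E x' + d₂ * E' x')‖ * ‖E x'‖ := by
            refine le_trans (norm_sub_le _ _) ?_
            rw [norm_mul, norm_mul]
        _ ≤ C * T x + C * T x' := by
            rw [habs, habs', mul_one, mul_one]
            exact add_le_add (hg x) (hg x')
        _ ≤ 2 * C * T x := by
            have := hTanti hxx'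
            nlinarith
    have hnorm : ‖d₁‖ ≤ 0 := by
      refine le_of_forall_pos_le_add ?_
      intro ε hε
      obtain ⟨x, hx⟩ := hTsmall (ε / (2 * C + 1)) (by positivity)
      have h1 := key x
      have h2 := hT0 x
      have hpos : (0:ℝ) < 2 * C + 1 := by positivity
      have h5 : (2 * C + 1) * (ε / (2 * C + 1)) = ε := by field_simp
      have h4 : (2 * C + 1) * T x < ε := by
        have := mul_lt_mul_of_pos_left hx hpos
        rwa [h5] at this
      rw [zero_add]
      nlinarith [mul_nonneg hC0 h2]
    exact norm_le_zero_iff.1 hnorm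
  refine ⟨hd₁, ?_⟩
  have key2 : ∀ x : ℝ, ‖d₂‖ ≤ C * T x := by
    intro x
    have habs' : ‖E' x‖ = 1 := jost_abs_exp' x
    calc ‖d₂‖ = ‖d₂ * E' x‖ := by rw [norm_mul, habs', mul_one]
      _ = ‖d₁ * E x + d₂ * E' x‖ := by rw [hd₁]; ring_nf
      _ ≤ C * T x := hg x
  have hnorm : ‖d₂‖ ≤ 0 := by
    refine le_of_forall_pos_le_add ?_
    intro ε hε
    obtain ⟨x, hx⟩ := hTsmall (ε / (C + 1)) (by positivity)
    have h1 := key2 x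
    have h2 := hT0 x
    have hpos : (0:ℝ) < C + 1 := by positivity
    have h5 : (C + 1) * (ε / (C + 1)) = ε := by field_simp
    have h4 : (C + 1) * T x < ε := by
      have := mul_lt_mul_of_pos_left hx hpos
      rwa [h5] at this
    rw [zero_add]
    nlinarith [mul_nonneg hC0 h2]
  exact norm_le_zero_iff.1 hnorm

/-- Theorem 2, first relation: the left Jost solution `f₋(k,·)` is a unique linear
combination of the right Jost solutions `f₊(k,·)` and `f₊(−k,·)`; the coefficients are
the scattering coefficients in the relation `s₂₂ f₋ = s₂₁ f₊ + f₊(−k,·)`. -/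
theorem left_jost_combination_of_right (q : ℝ → ℂ) (hq : Continuous q)
    (hq' : Integrable (fun x => (1 + |x|) * ‖q x‖)) (k : ℝ) (hk : k ≠ 0)
    (fpk fpmk fmk : ℝ → ℂ)
    (hfpk : Continuous fpk) (hfpkb : ∃ C : ℝ, ∀ x, ‖fpk x‖ ≤ C)
    (hfpkeq : ∀ x : ℝ, fpk x = Complex.exp (Complex.I * k * x) -
        ∫ t in Set.Ici x, ((Real.sin (k * (x - t)) / k : ℝ) : ℂ) * q t * fpk t)
    (hfpmk : Continuous fpmk) (hfpmkb : ∃ C : ℝ, ∀ x, ‖fpmk x‖ ≤ C)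
    (hfpmkeq : ∀ x : ℝ, fpmk x = Complex.exp (Complex.I * (-k) * x) -
        ∫ t in Set.Ici x, ((Real.sin ((-k) * (x - t)) / (-k) : ℝ) : ℂ) * q t * fpmk t)
    (hfmk : Continuous fmk) (hfmkb : ∃ C : ℝ, ∀ x, ‖fmk x‖ ≤ C)
    (hfmkeq : ∀ x : ℝ, fmk x = Complex.exp (-(Complex.I * k * x)) +
        ∫ t in Set.Iic x, ((Real.sin (k * (x - t)) / k : ℝ) : ℂ) * q t * fmk t) :
    ∃! c : ℂ × ℂ, ∀ x : ℝ, fmk x = c.1 * fpk x + c.2 * fpmk x := by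
  obtain ⟨Mp, hMp⟩ := hfpkb
  obtain ⟨Mpm, hMpm⟩ := hfpmkb
  obtain ⟨Mm, hMm⟩ := hfmkb
  have hqn : Integrable (fun x => ‖q x‖) := jost_qnorm_int hq hq'
  have hkC : (k : ℂ) ≠ 0 := by exact_mod_cast hk
  have hkp : (0:ℝ) < |k| := abs_pos.2 hk
  have hMp0 : 0 ≤ Mp := le_trans (norm_nonneg _) (hMp 0)
  have hMpm0 : 0 ≤ Mpm := le_trans (norm_nonneg _) (hMpm 0)
  have hMm0 : 0 ≤ Mm := le_trans (norm_nonneg _) (hMm 0)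
  -- normalize the equation for fpmk
  have hfpmkeq' : ∀ x : ℝ, fpmk x = Complex.exp (-(Complex.I * k * x)) -
      ∫ t in Set.Ici x, ((Real.sin (k * (x - t)) / k : ℝ) : ℂ) * q t * fpmk t := by
    intro x
    rw [hfpmkeq x]
    congr 1
    · congr 1
      push_cast
      ring
    · refine integral_congr_ae (Filter.Eventually.of_forall fun t => ?_)
      show ((Real.sin ((-k) * (x - t)) / (-k) : ℝ) : ℂ) * q t * fpmk t
        = ((Real.sin (k * (x - t)) / k : ℝ) : ℂ) * q t * fpmk t
      rw [show (-k) * (x - t) = -(k * (x - t)) by ring, Real.sin_neg, neg_div_neg_eq]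
  -- weighted integrabilities
  have icos : Integrable (fun t => ((Real.cos (k * t) : ℝ) : ℂ) * (q t * fmk t)) := by
    refine (hqn.const_mul Mm).mono' ?_ ?_
    · apply Continuous.aestronglyMeasurable
      fun_prop
    · filter_upwards with t
      calc ‖((Real.cos (k * t) : ℝ) : ℂ) * (q t * fmk t)‖
          = |Real.cos (k * t)| * (‖q t‖ * ‖fmk t‖) := by
            rw [norm_mul, norm_mul, Complex.norm_real, Real.norm_eq_abs]
        _ ≤ 1 * (‖q t‖ * Mm) := by
            refine mul_le_mul (Real.abs_cos_le_one _)
              (mul_le_mul_of_nonneg_left (hMm t) (norm_nonneg _)) (by positivity) one_pos.le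
        _ = Mm * ‖q t‖ := by ring
  have isin : Integrable (fun t => ((Real.sin (k * t) : ℝ) : ℂ) * (q t * fmk t)) := by
    refine (hqn.const_mul Mm).mono' ?_ ?_
    · apply Continuous.aestronglyMeasurable
      fun_prop
    · filter_upwards with t
      calc ‖((Real.sin (k * t) : ℝ) : ℂ) * (q t * fmk t)‖
          = |Real.sin (k * t)| * (‖q t‖ * ‖fmk t‖) := by
            rw [norm_mul, norm_mul, Complex.norm_real, Real.norm_eq_abs]
        _ ≤ 1 * (‖q t‖ * Mm) := by
            refine mul_le_mul (Real.abs_sin_le_one _)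
              (mul_le_mul_of_nonneg_left (hMm t) (norm_nonneg _)) (by positivity) one_pos.le
        _ = Mm * ‖q t‖ := by ring
  set A : ℂ := ∫ t, ((Real.cos (k * t) : ℝ) : ℂ) * (q t * fmk t) with hA
  set B : ℂ := ∫ t, ((Real.sin (k * t) : ℝ) : ℂ) * (q t * fmk t) with hB
  set c₁ : ℂ := -(B + A * Complex.I) / (2 * k) with hc₁
  set c₂ : ℂ := 1 + (A * Complex.I - B) / (2 * k) with hc₂
  have hker_m := fun x => jost_ker_int hq hqn hk hfmk hMm x
  have hker_p := fun x => jost_ker_int hq hqn hk hfpk hMp x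
  have hker_pm := fun x => jost_ker_int hq hqn hk hfpmk hMpm x
  -- full-line integral identity
  have key1 : ∀ x : ℝ, (∫ t, ((Real.sin (k * (x - t)) / k : ℝ) : ℂ) * q t * fmk t)
      = c₁ * Complex.exp (Complex.I * k * x) + (c₂ - 1) * Complex.exp (-(Complex.I * k * x)) := by
    intro x
    have hpt : (fun t => ((Real.sin (k * (x - t)) / k : ℝ) : ℂ) * q t * fmk t)
        = fun t => ((Real.sin (k * x) / k : ℝ) : ℂ) * (((Real.cos (k * t) : ℝ) : ℂ) * (q t * fmk t))
          - ((Real.cos (k * x) / k : ℝ) : ℂ) * (((Real.sin (k * t) : ℝ) : ℂ) * (q t * fmk t)) := by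
      funext t
      have hs : Real.sin (k * (x - t))
          = Real.sin (k * x) * Real.cos (k * t) - Real.cos (k * x) * Real.sin (k * t) := by
        rw [show k * (x - t) = k * x - k * t by ring, Real.sin_sub]
      rw [hs]
      push_cast
      ring
    rw [hpt, integral_sub (icos.const_mul _) (isin.const_mul _), integral_const_mul,
      integral_const_mul, ← hA, ← hB, hc₁, hc₂]
    rw [show Complex.I * (k:ℂ) * (x:ℂ) = ((k * x : ℝ) : ℂ) * Complex.I by push_cast; ring]
    rw [show -((((k * x) : ℝ) : ℂ) * Complex.I) = (-(((k * x) : ℝ) : ℂ)) * Complex.I by ring]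
    rw [Complex.exp_mul_I, Complex.exp_mul_I, Complex.cos_neg, Complex.sin_neg]
    push_cast
    field_simp [hkC]
    ring_nf
    rw [Complex.I_sq]
    ring
  -- right-type representation of fmk
  have key2 : ∀ x : ℝ, fmk x = c₁ * Complex.exp (Complex.I * k * x)
      + c₂ * Complex.exp (-(Complex.I * k * x))
      - ∫ t in Set.Ici x, ((Real.sin (k * (x - t)) / k : ℝ) : ℂ) * q t * fmk t := by
    intro x
    have hsplit : (∫ t, ((Real.sin (k * (x - t)) / k : ℝ) : ℂ) * q t * fmk t)
        = (∫ t in Set.Iic x, ((Real.sin (k * (x - t)) / k : ℝ) : ℂ) * q t * fmk t)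
          + ∫ t in Set.Ici x, ((Real.sin (k * (x - t)) / k : ℝ) : ℂ) * q t * fmk t := by
      rw [← setIntegral_univ, ← Set.Iic_union_Ioi (a := x),
        setIntegral_union (Set.Iic_disjoint_Ioi le_rfl) measurableSet_Ioi
          (hker_m x).integrableOn (hker_m x).integrableOn, ← integral_Ici_eq_integral_Ioi]
    have h1 := key1 x
    rw [hfmkeq x]
    linear_combination h1 - hsplit
  -- the difference satisfies the homogeneous equation
  set h : ℝ → ℂ := fun x => fmk x - (c₁ * fpk x + c₂ * fpmk x) with hhdef
  have hhcont : Continuous h := by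
    rw [hhdef]
    fun_prop
  have hhb : ∀ x, ‖h x‖ ≤ Mm + (‖c₁‖ * Mp + ‖c₂‖ * Mpm) := by
    intro x
    rw [hhdef]
    calc ‖fmk x - (c₁ * fpk x + c₂ * fpmk x)‖
        ≤ ‖fmk x‖ + ‖c₁ * fpk x + c₂ * fpmk x‖ := norm_sub_le _ _
      _ ≤ Mm + (‖c₁‖ * ‖fpk x‖ + ‖c₂‖ * ‖fpmk x‖) := by
          refine add_le_add (hMm x) (le_trans (norm_add_le _ _) ?_)
          rw [norm_mul, norm_mul]
      _ ≤ Mm + (‖c₁‖ * Mp + ‖c₂‖ * Mpm) := by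
          gcongr
          · exact hMp x
          · exact hMpm x
  have hheq : ∀ x, h x = -∫ t in Set.Ici x, ((Real.sin (k * (x - t)) / k : ℝ) : ℂ) * q t * h t := by
    intro x
    have hintsplit : (∫ t in Set.Ici x, ((Real.sin (k * (x - t)) / k : ℝ) : ℂ) * q t * h t)
        = (∫ t in Set.Ici x, ((Real.sin (k * (x - t)) / k : ℝ) : ℂ) * q t * fmk t)
          - c₁ * (∫ t in Set.Ici x, ((Real.sin (k * (x - t)) / k : ℝ) : ℂ) * q t * fpk t)
          - c₂ * (∫ t in Set.Ici x, ((Real.sin (k * (x - t)) / k : ℝ) : ℂ) * q t * fpmk t) := by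
      calc (∫ t in Set.Ici x, ((Real.sin (k * (x - t)) / k : ℝ) : ℂ) * q t * h t)
          = ∫ t in Set.Ici x, (((Real.sin (k * (x - t)) / k : ℝ) : ℂ) * q t * fmk t
              - c₁ * (((Real.sin (k * (x - t)) / k : ℝ) : ℂ) * q t * fpk t)
              - c₂ * (((Real.sin (k * (x - t)) / k : ℝ) : ℂ) * q t * fpmk t)) := by
            refine integral_congr_ae (Filter.Eventually.of_forall fun t => ?_)
            rw [hhdef]
            ring
        _ = (∫ t in Set.Ici x, ((Real.sin (k * (x - t)) / k : ℝ) : ℂ) * q t * fmk t)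
              - c₁ * (∫ t in Set.Ici x, ((Real.sin (k * (x - t)) / k : ℝ) : ℂ) * q t * fpk t)
              - c₂ * (∫ t in Set.Ici x, ((Real.sin (k * (x - t)) / k : ℝ) : ℂ) * q t * fpmk t) := by
            have hint1 : Integrable (fun t => ((Real.sin (k * (x - t)) / k : ℝ) : ℂ) * q t * fmk t
                - c₁ * (((Real.sin (k * (x - t)) / k : ℝ) : ℂ) * q t * fpk t)) :=
              (hker_m x).sub ((hker_p x).const_mul c₁)
            rw [integral_sub hint1.integrableOn (((hker_pm x).const_mul c₂).integrableOn),
              integral_sub ((hker_m x).integrableOn) (((hker_p x).const_mul c₁).integrableOn),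
              integral_const_mul, integral_const_mul]
    show fmk x - (c₁ * fpk x + c₂ * fpmk x)
      = -∫ t in Set.Ici x, ((Real.sin (k * (x - t)) / k : ℝ) : ℂ) * q t * h t
    rw [hintsplit, key2 x, hfpkeq x, hfpmkeq' x]
    ring
  have hzero := jost_volterra hq hqn hk hhcont hhb hheq
  have hrep : ∀ x, fmk x = c₁ * fpk x + c₂ * fpmk x := by
    intro x
    have hx := hzero x
    rw [hhdef] at hx
    simp only [sub_eq_zero] at hx
    exact hx
  -- uniqueness via asymptotics
  have hTsmall : ∀ ε : ℝ, 0 < ε → ∃ x, (∫ t in Set.Ici x, ‖q t‖) < ε := fun ε hε =>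
    jost_tail_small hqn hε
  have hasymp : ∀ x : ℝ, ‖fpk x - Complex.exp (Complex.I * k * x)‖
      ≤ Mp / |k| * ∫ t in Set.Ici x, ‖q t‖ := by
    intro x
    have hd : fpk x - Complex.exp (Complex.I * k * x)
        = -∫ t in Set.Ici x, ((Real.sin (k * (x - t)) / k : ℝ) : ℂ) * q t * fpk t := by
      rw [hfpkeq x]; ring
    rw [hd, norm_neg]
    exact jost_int_norm_le hq hqn hk hfpk hMp x
  have hasymp' : ∀ x : ℝ, ‖fpmk x - Complex.exp (-(Complex.I * k * x))‖
      ≤ Mpm / |k| * ∫ t in Set.Ici x, ‖q t‖ := by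
    intro x
    have hd : fpmk x - Complex.exp (-(Complex.I * k * x))
        = -∫ t in Set.Ici x, ((Real.sin (k * (x - t)) / k : ℝ) : ℂ) * q t * fpmk t := by
      rw [hfpmkeq' x]; ring
    rw [hd, norm_neg]
    exact jost_int_norm_le hq hqn hk hfpmk hMpm x
  refine ⟨(c₁, c₂), fun x => hrep x, ?_⟩
  rintro ⟨a, b⟩ hab
  have hdiff : ∀ x, (a - c₁) * fpk x + (b - c₂) * fpmk x = 0 := by
    intro x
    linear_combination hrep x - hab x
  obtain ⟨h1, h2⟩ := jost_indep hk (jost_tail_nonneg (q := q)) (jost_tail_anti hqn) hTsmall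
    (by positivity : (0:ℝ) ≤ Mp / |k|) (by positivity : (0:ℝ) ≤ Mpm / |k|)
    hasymp hasymp' (a - c₁) (b - c₂) hdiff
  simp only [Prod.mk.injEq]
  exact ⟨sub_eq_zero.1 h1, sub_eq_zero.1 h2⟩
end

section
/- (Theorem 2, second relation.) Let q : ℝ → ℂ be continuous with ∫_ℝ (1+|x|)|q(x)| dx < ∞ and let k be a nonzero real number. Let f₋(k,·), f₋(−k,·) be the left Jost solutions for k and −k, and let f₊(k,·) be the right Jost solution for k. Then there exists a unique pair of complex constants (d₁, d₂) such that f₊(k,x) = d₁ · f₋(k,x) + d₂ · f₋(−k,x) for all x ∈ ℝ. (This is the relation s₁₁ f₊ = s₁₂ f₋ + f₋(−k,·) after normalization.) -/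
open MeasureTheory
open Complex

theorem sk_decomp (k x t : ℝ) (hk : k ≠ 0) :
    ((Real.sin (k * (x - t)) / k : ℝ) : ℂ) =
      Complex.exp (Complex.I * k * x) * (Complex.exp (-(Complex.I * k * t)) / (2 * Complex.I * k))
      - Complex.exp (-(Complex.I * k * x)) * (Complex.exp (Complex.I * k * t) / (2 * Complex.I * k)) := by
  have hI : (Complex.I : ℂ) ≠ 0 := Complex.I_ne_zero
  have hkc : (k : ℂ) ≠ 0 := by exact_mod_cast hk
  have h2Ik : (2 : ℂ) * I * k ≠ 0 := by simp [hkc, hI]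
  have h2 := Complex.two_sin (x := (k : ℂ) * (x - t))
  have e1 : Complex.exp (-((k:ℂ)*((x:ℂ)-t)) * I) = Complex.exp (-(I*k*x)) * Complex.exp (I*k*t) := by
    rw [← Complex.exp_add]; ring_nf
  have e2 : Complex.exp (((k:ℂ)*((x:ℂ)-t)) * I) = Complex.exp (I*k*x) * Complex.exp (-(I*k*t)) := by
    rw [← Complex.exp_add]; ring_nf
  rw [e1, e2] at h2
  have hII : I * I = -1 := Complex.I_mul_I
  have main : Complex.sin ((k:ℂ)*((x:ℂ)-t)) * (2*I) =
      Complex.exp (I*k*x) * Complex.exp (-(I*k*t)) - Complex.exp (-(I*k*x)) * Complex.exp (I*k*t) := by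
    linear_combination I*h2 + (Complex.exp (-(I*k*x)) * Complex.exp (I*k*t) - Complex.exp (I*k*x) * Complex.exp (-(I*k*t)))*hII
  rw [Complex.ofReal_div, Complex.ofReal_sin]
  push_cast
  rw [show Complex.exp (I * ↑k * ↑x) * (Complex.exp (-(I * ↑k * ↑t)) / (2 * I * ↑k))
      - Complex.exp (-(I * ↑k * ↑x)) * (Complex.exp (I * ↑k * ↑t) / (2 * I * ↑k))
      = (Complex.exp (I*k*x) * Complex.exp (-(I*k*t)) - Complex.exp (-(I*k*x)) * Complex.exp (I*k*t)) / (2*I*k) by ring]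
  rw [div_eq_div_iff hkc h2Ik]
  linear_combination (k : ℂ) * main

theorem norm_exp_mul (k t : ℝ) : ‖Complex.exp (Complex.I * k * t)‖ = 1 := by
  rw [show Complex.I * k * t = Complex.I * ((k*t : ℝ) : ℂ) by push_cast; ring,
    mul_comm Complex.I]
  exact Complex.norm_exp_ofReal_mul_I _

theorem norm_exp_neg_mul (k t : ℝ) : ‖Complex.exp (-(Complex.I * k * t))‖ = 1 := by
  rw [show -(Complex.I * k * t) = Complex.I * ((-(k*t) : ℝ) : ℂ) by push_cast; ring,
    mul_comm Complex.I]
  exact Complex.norm_exp_ofReal_mul_I _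

theorem exp_ker_integrable (k : ℝ) (w : ℝ → ℂ) (hw : Integrable w) (c : ℂ)
    (hnorm : ∀ t : ℝ, ‖Complex.exp (c * t)‖ = 1) :
    Integrable (fun t : ℝ => Complex.exp (c * t) / (2 * Complex.I * k) * w t) := by
  refine hw.bdd_mul ((Complex.continuous_exp.comp
    (continuous_const.mul Complex.continuous_ofReal)).div_const _).aestronglyMeasurable
    (c := 1 / ‖(2 * Complex.I * k : ℂ)‖) (Filter.Eventually.of_forall fun t => ?_)
  rw [norm_div, hnorm t]

theorem tail_decomp (k : ℝ) (hk : k ≠ 0) (w : ℝ → ℂ) (hw : Integrable w)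
    (S : Set ℝ) (hS : MeasurableSet S) (x : ℝ) :
    ∫ t in S, ((Real.sin (k * (x - t)) / k : ℝ) : ℂ) * w t =
      (Complex.exp (Complex.I * k * x) * ∫ t in S, Complex.exp (-(Complex.I * k) * t) / (2 * Complex.I * k) * w t)
      - Complex.exp (-(Complex.I * k * x)) * ∫ t in S, Complex.exp ((Complex.I * k) * t) / (2 * Complex.I * k) * w t := by
  have hn1 : ∀ t : ℝ, ‖Complex.exp (-(Complex.I * k) * t)‖ = 1 := by
    intro t; rw [show -(Complex.I * k) * (t:ℂ) = -(Complex.I * k * t) by ring]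
    exact norm_exp_neg_mul k t
  have hn2 : ∀ t : ℝ, ‖Complex.exp ((Complex.I * k) * t)‖ = 1 := fun t => norm_exp_mul k t
  have h1 := exp_ker_integrable k w hw (-(Complex.I * k)) hn1
  have h2 := exp_ker_integrable k w hw (Complex.I * k) hn2
  calc ∫ t in S, ((Real.sin (k * (x - t)) / k : ℝ) : ℂ) * w t
      = ∫ t in S, (Complex.exp (Complex.I * k * x) * (Complex.exp (-(Complex.I * k) * t) / (2 * Complex.I * k) * w t)
          - Complex.exp (-(Complex.I * k * x)) * (Complex.exp ((Complex.I * k) * t) / (2 * Complex.I * k) * w t)) := by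
        refine setIntegral_congr_fun hS fun t _ => ?_
        rw [sk_decomp k x t hk]
        rw [show -(Complex.I * k) * (t:ℂ) = -(Complex.I * k * t) by ring]
        ring
    _ = (∫ t in S, Complex.exp (Complex.I * k * x) * (Complex.exp (-(Complex.I * k) * t) / (2 * Complex.I * k) * w t))
        - ∫ t in S, Complex.exp (-(Complex.I * k * x)) * (Complex.exp ((Complex.I * k) * t) / (2 * Complex.I * k) * w t) :=
        integral_sub ((h1.restrict (s := S)).const_mul _) ((h2.restrict (s := S)).const_mul _)
    _ = _ := by rw [MeasureTheory.integral_const_mul, MeasureTheory.integral_const_mul]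

theorem exp_comb_zero (k : ℝ) (hk : k ≠ 0) (a b : ℂ)
    (h : ∀ x : ℝ, a * Complex.exp (Complex.I * k * x) + b * Complex.exp (-(Complex.I * k * x)) = 0) :
    a = 0 ∧ b = 0 := by
  have h0 := h 0
  simp at h0
  have h1 := h (Real.pi / (2 * k))
  have harg : (Complex.I * k * ((Real.pi / (2 * k) : ℝ) : ℂ)) = (Real.pi / 2 : ℝ) * Complex.I := by
    have hkc : (k : ℂ) ≠ 0 := by exact_mod_cast hk
    push_cast
    field_simp
  rw [harg] at h1
  rw [Complex.exp_mul_I, ← Complex.ofReal_cos, ← Complex.ofReal_sin, Real.cos_pi_div_two,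
    Real.sin_pi_div_two] at h1
  rw [show -((Real.pi / 2 : ℝ) * Complex.I) = ((-(Real.pi/2) : ℝ) : ℂ) * Complex.I by push_cast; ring,
    Complex.exp_mul_I, ← Complex.ofReal_cos, ← Complex.ofReal_sin, Real.cos_neg, Real.sin_neg,
    Real.cos_pi_div_two, Real.sin_pi_div_two] at h1
  push_cast at h1
  simp at h1
  have ha : a = 0 := by
    have h2 : (2:ℂ) * a * Complex.I = 0 := by linear_combination h1 + Complex.I * h0
    simpa [Complex.I_ne_zero] using h2
  exact ⟨ha, by linear_combination h0 - ha⟩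

theorem q_integrable (q : ℝ → ℂ) (hq : Continuous q)
    (hq' : Integrable (fun x => (1 + |x|) * ‖q x‖)) : Integrable q := by
  refine hq'.mono' hq.aestronglyMeasurable (Filter.Eventually.of_forall fun x => ?_)
  have h1 : (1:ℝ) ≤ 1 + |x| := by linarith [abs_nonneg x]
  calc ‖q x‖ = 1 * ‖q x‖ := (one_mul _).symm
    _ ≤ (1 + |x|) * ‖q x‖ := by gcongr

-- integrable: bounded kernel * q * bounded u, globally
theorem ker_integrable (q u : ℝ → ℂ) (hq : Continuous q) (hqi : Integrable q)
    (hu : Continuous u) (C : ℝ) (hub : ∀ x, ‖u x‖ ≤ C) (g : ℝ → ℂ) (hg : Continuous g)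
    (D : ℝ) (hgb : ∀ t, ‖g t‖ ≤ D) :
    Integrable (fun t => g t * q t * u t) := by
  have : Integrable (fun t => (fun t => g t * u t) t * q t) := by
    refine hqi.bdd_mul ((hg.mul hu).aestronglyMeasurable) (c := D * C) (Filter.Eventually.of_forall fun t => ?_)
    calc ‖g t * u t‖ = ‖g t‖ * ‖u t‖ := norm_mul _ _
      _ ≤ D * C := by
          gcongr
          · exact le_trans (norm_nonneg _) (hgb t)
          · exact hgb t
          · exact hub t
  refine this.congr (Filter.Eventually.of_forall fun t => by ring)
theorem volterra_unique (k : ℝ) (hk : k ≠ 0) (q u : ℝ → ℂ) (hq : Continuous q)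
    (hu : Continuous u) (x₀ : ℝ)
    (h : ∀ x, u x = ∫ t in x₀..x, ((Real.sin (k * (x - t)) / k : ℝ) : ℂ) * q t * u t) :
    ∀ x, u x = 0 := by
  intro x₁
  set s : Set ℝ := Set.uIcc x₀ x₁ with hs
  have hcs : IsCompact s := isCompact_uIcc
  obtain ⟨M, hM⟩ := hcs.exists_bound_of_continuousOn hu.continuousOn
  obtain ⟨Kq, hKq⟩ := hcs.exists_bound_of_continuousOn hq.continuousOn
  have hM0 : 0 ≤ M := le_trans (norm_nonneg _) (hM x₀ Set.left_mem_uIcc)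
  have hKq0 : 0 ≤ Kq := le_trans (norm_nonneg _) (hKq x₀ Set.left_mem_uIcc)
  set K : ℝ := Kq / |k| with hK
  have hK0 : 0 ≤ K := div_nonneg hKq0 (abs_nonneg k)
  have hkpos : (0:ℝ) < |k| := abs_pos.2 hk
  have hker : ∀ x t : ℝ, ‖((Real.sin (k * (x - t)) / k : ℝ) : ℂ)‖ ≤ 1 / |k| := by
    intro x t
    rw [Complex.norm_real, Real.norm_eq_abs, abs_div]
    gcongr
    exact Real.abs_sin_le_one _
  have hgc : ∀ x : ℝ, Continuous (fun t => ((Real.sin (k * (x - t)) / k : ℝ) : ℂ) * q t * u t) := by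
    intro x
    exact (Complex.continuous_ofReal.comp ((Real.continuous_sin.comp
      (continuous_const.mul (continuous_const.sub continuous_id))).div_const k)).mul hq |>.mul hu
  have hfac : ∀ n : ℕ, ((n.factorial : ℝ)) ≠ 0 := fun n => Nat.cast_ne_zero.2 n.factorial_ne_zero
  have claim : ∀ n : ℕ, ∀ x ∈ s, ‖u x‖ ≤ M * K ^ n * |x - x₀| ^ n / n.factorial := by
    intro n
    induction n with
    | zero => intro x hx; simpa using hM x hx
    | succ n ih =>
      intro x hx
      have hsub : Set.uIcc x₀ x ⊆ s :=
        Set.uIcc_subset_uIcc Set.left_mem_uIcc hx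
      rw [h x]
      refine le_trans (intervalIntegral.norm_integral_le_abs_integral_norm) ?_
      have hbound : ∀ t ∈ Set.uIcc x₀ x,
          ‖((Real.sin (k * (x - t)) / k : ℝ) : ℂ) * q t * u t‖ ≤
            K * (M * K ^ n * |t - x₀| ^ n / n.factorial) := by
        intro t ht
        have hts : t ∈ s := hsub ht
        calc ‖((Real.sin (k * (x - t)) / k : ℝ) : ℂ) * q t * u t‖
            = ‖((Real.sin (k * (x - t)) / k : ℝ) : ℂ)‖ * ‖q t‖ * ‖u t‖ := by
              simp [norm_mul]
          _ ≤ (1 / |k|) * Kq * (M * K ^ n * |t - x₀| ^ n / n.factorial) := by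
              gcongr
              · exact hker x t
              · exact hKq t hts
              · exact ih t hts
          _ = K * (M * K ^ n * |t - x₀| ^ n / n.factorial) := by
              rw [hK]; ring
      have hcont2 : ∀ c : ℝ, Continuous (fun t : ℝ => K * (M * K ^ n * (c * (t - x₀)) ^ n / n.factorial)) := by
        intro c
        exact continuous_const.mul ((continuous_const.mul
          ((continuous_const.mul (continuous_id.sub continuous_const)).pow n)).div_const _)
      rcases le_total x₀ x with hc | hc
      · rw [_root_.abs_of_nonneg (intervalIntegral.integral_nonneg hc fun t _ => norm_nonneg _)]
        have hmono : (∫ t in x₀..x, ‖((Real.sin (k * (x - t)) / k : ℝ) : ℂ) * q t * u t‖) ≤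
            ∫ t in x₀..x, K * (M * K ^ n * (1 * (t - x₀)) ^ n / n.factorial) := by
          refine intervalIntegral.integral_mono_on hc
            (((hgc x).norm).intervalIntegrable _ _)
            (((hcont2 1)).intervalIntegrable _ _) ?_
          intro t ht
          have := hbound t (by rw [Set.uIcc_of_le hc]; exact ht)
          rw [_root_.abs_of_nonneg (by linarith [ht.1])] at this
          simpa using this
        refine hmono.trans (le_of_eq ?_)
        have hrw : (fun t : ℝ => K * (M * K ^ n * (1 * (t - x₀)) ^ n / n.factorial)) =
            (fun t : ℝ => (K * M * K ^ n / n.factorial) * (t - x₀) ^ n) := by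
          funext t; ring
        rw [hrw, intervalIntegral.integral_const_mul,
          intervalIntegral.integral_comp_sub_right (fun s => s ^ n) x₀, integral_pow]
        rw [_root_.abs_of_nonneg (by linarith), Nat.factorial_succ]
        push_cast
        have h1 : ((n:ℝ)+1) ≠ 0 := by positivity
        field_simp
        ring
      · rw [intervalIntegral.integral_symm, _root_.abs_neg,
          _root_.abs_of_nonneg (intervalIntegral.integral_nonneg hc fun t _ => norm_nonneg _)]
        have hmono : (∫ t in x..x₀, ‖((Real.sin (k * (x - t)) / k : ℝ) : ℂ) * q t * u t‖) ≤
            ∫ t in x..x₀, K * (M * K ^ n * ((-1) * (t - x₀)) ^ n / n.factorial) := by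
          refine intervalIntegral.integral_mono_on hc
            (((hgc x).norm).intervalIntegrable _ _)
            (((hcont2 (-1))).intervalIntegrable _ _) ?_
          intro t ht
          have := hbound t (by rw [Set.uIcc_of_ge hc]; exact ht)
          rw [_root_.abs_of_nonpos (by linarith [ht.2])] at this
          have e : ((-1) * (t - x₀)) ^ n = (-(t - x₀)) ^ n := by ring_nf
          rw [e]
          exact this
        refine hmono.trans (le_of_eq ?_)
        have hrw : (fun t : ℝ => K * (M * K ^ n * ((-1) * (t - x₀)) ^ n / n.factorial)) =
            (fun t : ℝ => (K * M * K ^ n / n.factorial) * (x₀ - t) ^ n) := by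
          funext t; ring_nf
        rw [hrw, intervalIntegral.integral_const_mul,
          intervalIntegral.integral_comp_sub_left (fun s => s ^ n) x₀, integral_pow]
        rw [_root_.abs_of_nonpos (by linarith), Nat.factorial_succ]
        push_cast
        have h1 : ((n:ℝ)+1) ≠ 0 := by positivity
        field_simp
        ring
  have hr := fun n => claim n x₁ Set.right_mem_uIcc
  have hlim : Filter.Tendsto (fun n : ℕ => M * K ^ n * |x₁ - x₀| ^ n / n.factorial)
      Filter.atTop (nhds 0) := by
    have he : (fun n : ℕ => M * K ^ n * |x₁ - x₀| ^ n / n.factorial) =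
        (fun n : ℕ => M * ((K * |x₁ - x₀|) ^ n / n.factorial)) := by
      funext n; rw [mul_pow]; ring
    rw [he]
    simpa using (FloorSemiring.tendsto_pow_div_factorial_atTop (K * |x₁ - x₀|)).const_mul M
  have : ‖u x₁‖ ≤ 0 := ge_of_tendsto' hlim hr
  simpa using le_antisymm this (norm_nonneg _)

theorem tail_small (k B : ℝ) (hk : k ≠ 0) (hB : 0 < B) (q u : ℝ → ℂ)
    (hqInt : Integrable q) (hw : Integrable (fun t => q t * u t))
    (hub : ∀ x, ‖u x‖ ≤ B) (c : ℂ)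
    (hnorm : ∀ t : ℝ, ‖Complex.exp (c * t)‖ = 1) (S : Set ℝ) (hS : MeasurableSet S)
    (hsmall : ∫ t in S, ‖q t‖ ≤ |k| / (2 * B)) :
    ‖∫ t in S, Complex.exp (c * t) / (2 * Complex.I * k) * (q t * u t)‖ ≤ 1 / 4 := by
  have hkpos : (0:ℝ) < |k| := abs_pos.2 hk
  have h2Ik : ‖(2 * Complex.I * k : ℂ)‖ = 2 * |k| := by
    simp [norm_mul, Complex.norm_real, Real.norm_eq_abs]
  have hpoint : ∀ t : ℝ, ‖Complex.exp (c * t) / (2 * Complex.I * k) * (q t * u t)‖ ≤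
      B / (2 * |k|) * ‖q t‖ := by
    intro t
    rw [norm_mul, norm_div, hnorm t, h2Ik, norm_mul]
    calc 1 / (2 * |k|) * (‖q t‖ * ‖u t‖) ≤ 1 / (2 * |k|) * (‖q t‖ * B) := by
          gcongr
          exact hub t
      _ = B / (2 * |k|) * ‖q t‖ := by ring
  calc ‖∫ t in S, Complex.exp (c * t) / (2 * Complex.I * k) * (q t * u t)‖
      ≤ ∫ t in S, ‖Complex.exp (c * t) / (2 * Complex.I * k) * (q t * u t)‖ :=
        norm_integral_le_integral_norm _
    _ ≤ ∫ t in S, B / (2 * |k|) * ‖q t‖ := by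
        refine integral_mono ((exp_ker_integrable k _ hw c hnorm).norm.restrict) ?_ hpoint
        exact (hqInt.norm.const_mul _).restrict
    _ = B / (2 * |k|) * ∫ t in S, ‖q t‖ := by
        rw [MeasureTheory.integral_const_mul]
    _ ≤ B / (2 * |k|) * (|k| / (2 * B)) := by
        gcongr
    _ = 1 / 4 := by field_simp; ring
/-- Theorem 2, second relation: the right Jost solution `f₊(k,·)` is a unique linear
combination of the left Jost solutions `f₋(k,·)` and `f₋(−k,·)`; this is the relation
`s₁₁ f₊ = s₁₂ f₋ + f₋(−k,·)` after normalization. -/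
theorem right_jost_combination_of_left (q : ℝ → ℂ) (hq : Continuous q)
    (hq' : Integrable (fun x => (1 + |x|) * ‖q x‖)) (k : ℝ) (hk : k ≠ 0)
    (fmk fmmk fpk : ℝ → ℂ)
    (hfmk : Continuous fmk) (hfmkb : ∃ C : ℝ, ∀ x, ‖fmk x‖ ≤ C)
    (hfmkeq : ∀ x : ℝ, fmk x = Complex.exp (-(Complex.I * k * x)) +
        ∫ t in Set.Iic x, ((Real.sin (k * (x - t)) / k : ℝ) : ℂ) * q t * fmk t)
    (hfmmk : Continuous fmmk) (hfmmkb : ∃ C : ℝ, ∀ x, ‖fmmk x‖ ≤ C)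
    (hfmmkeq : ∀ x : ℝ, fmmk x = Complex.exp (-(Complex.I * (-k) * x)) +
        ∫ t in Set.Iic x, ((Real.sin ((-k) * (x - t)) / (-k) : ℝ) : ℂ) * q t * fmmk t)
    (hfpk : Continuous fpk) (hfpkb : ∃ C : ℝ, ∀ x, ‖fpk x‖ ≤ C)
    (hfpkeq : ∀ x : ℝ, fpk x = Complex.exp (Complex.I * k * x) -
        ∫ t in Set.Ici x, ((Real.sin (k * (x - t)) / k : ℝ) : ℂ) * q t * fpk t) :
    ∃! d : ℂ × ℂ, ∀ x : ℝ, fpk x = d.1 * fmk x + d.2 * fmmk x := by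
  obtain ⟨C₁, hC₁⟩ := hfmkb
  obtain ⟨C₂, hC₂⟩ := hfmmkb
  obtain ⟨C₃, hC₃⟩ := hfpkb
  have hqInt : Integrable q := q_integrable q hq hq'
  -- the products q * u are integrable
  have hwint : ∀ (u : ℝ → ℂ), Continuous u → (∃ C, ∀ x, ‖u x‖ ≤ C) →
      Integrable (fun t => q t * u t) := by
    intro u hu ⟨C, hC⟩
    exact (hqInt.bdd_mul hu.aestronglyMeasurable (c := C) (Filter.Eventually.of_forall hC)).congr
      (Filter.Eventually.of_forall fun t => by ring)
  have hw₁ := hwint fmk hfmk ⟨C₁, hC₁⟩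
  have hw₂ := hwint fmmk hfmmk ⟨C₂, hC₂⟩
  have hw₃ := hwint fpk hfpk ⟨C₃, hC₃⟩
  -- kernel continuity and bound
  have hSkc : ∀ x : ℝ, Continuous (fun t => ((Real.sin (k * (x - t)) / k : ℝ) : ℂ)) := by
    intro x
    exact Complex.continuous_ofReal.comp ((Real.continuous_sin.comp
      (continuous_const.mul (continuous_const.sub continuous_id))).div_const k)
  have hkerb : ∀ x t : ℝ, ‖((Real.sin (k * (x - t)) / k : ℝ) : ℂ)‖ ≤ 1 / |k| := by
    intro x t
    rw [Complex.norm_real, Real.norm_eq_abs, abs_div]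
    gcongr
    exact Real.abs_sin_le_one _
  -- global integrability of the full integrands
  have hFint : ∀ (u : ℝ → ℂ), Continuous u → (∃ C, ∀ x, ‖u x‖ ≤ C) → ∀ x : ℝ,
      Integrable (fun t => ((Real.sin (k * (x - t)) / k : ℝ) : ℂ) * q t * u t) := by
    intro u hu ⟨C, hC⟩ x
    exact ker_integrable q u hq hqInt hu C hC _ (hSkc x) (1/|k|) (hkerb x)
  have hF₁ := hFint fmk hfmk ⟨C₁, hC₁⟩
  have hF₂ := hFint fmmk hfmmk ⟨C₂, hC₂⟩
  have hF₃ := hFint fpk hfpk ⟨C₃, hC₃⟩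
  -- rewrite the fmmk equation with the same kernel
  have hfmmkeq' : ∀ x : ℝ, fmmk x = Complex.exp (Complex.I * k * x) +
      ∫ t in Set.Iic x, ((Real.sin (k * (x - t)) / k : ℝ) : ℂ) * q t * fmmk t := by
    intro x
    rw [hfmmkeq x]
    congr 1
    · congr 1
      push_cast
      ring
    · refine setIntegral_congr_fun measurableSet_Iic fun t _ => ?_
      rw [neg_mul, Real.sin_neg, neg_div_neg_eq]
  -- bound for fmk and fmmk
  set B : ℝ := max (max C₁ C₂) 1 with hBdef
  have hB : (0:ℝ) < B := lt_of_lt_of_le one_pos (le_max_right _ _)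
  have hfmkB : ∀ x, ‖fmk x‖ ≤ B :=
    fun x => (hC₁ x).trans ((le_max_left C₁ C₂).trans (le_max_left _ _))
  have hfmmkB : ∀ x, ‖fmmk x‖ ≤ B :=
    fun x => (hC₂ x).trans ((le_max_right C₁ C₂).trans (le_max_left _ _))
  -- choose x₀ far to the left
  have hεpos : (0:ℝ) < |k| / (2 * B) := by positivity
  have htends : Filter.Tendsto (fun n : ℕ => ∫ t in Set.Iic (-(n:ℝ)), ‖q t‖)
      Filter.atTop (nhds 0) := by
    have hempty : (⋂ n : ℕ, Set.Iic (-(n:ℝ))) = (∅ : Set ℝ) := by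
      ext y
      simp only [Set.mem_iInter, Set.mem_Iic, Set.mem_empty_iff_false, iff_false, not_forall,
        not_le]
      obtain ⟨n, hn⟩ := exists_nat_gt (-y)
      exact ⟨n, by linarith⟩
    have h := tendsto_setIntegral_of_antitone (μ := volume) (f := fun t => ‖q t‖)
      (s := fun n : ℕ => Set.Iic (-(n:ℝ))) (fun n => measurableSet_Iic)
      (fun m n hmn => Set.Iic_subset_Iic.2 (by simp; exact_mod_cast hmn))
      ⟨0, hqInt.norm.integrableOn⟩
    rwa [hempty, Measure.restrict_empty, integral_zero_measure] at h
  obtain ⟨n, hn⟩ := (htends.eventually (gt_mem_nhds hεpos)).exists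
  set x₀ : ℝ := -(n:ℝ) with hx₀def
  have hx₀ : ∫ t in Set.Iic x₀, ‖q t‖ ≤ |k| / (2 * B) := le_of_lt hn
  -- exponential norm facts
  have hn1 : ∀ t : ℝ, ‖Complex.exp (-(Complex.I * k) * t)‖ = 1 := by
    intro t
    rw [show -(Complex.I * k) * (t:ℂ) = -(Complex.I * k * t) by ring]
    exact norm_exp_neg_mul k t
  have hn2 : ∀ t : ℝ, ‖Complex.exp ((Complex.I * k) * t)‖ = 1 := fun t => norm_exp_mul k t
  -- the six tail coefficients
  set cm1 : ℂ := ∫ t in Set.Iic x₀,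
    Complex.exp (-(Complex.I * k) * t) / (2 * Complex.I * k) * (q t * fmk t) with hcm1def
  set dm1 : ℂ := ∫ t in Set.Iic x₀,
    Complex.exp ((Complex.I * k) * t) / (2 * Complex.I * k) * (q t * fmk t) with hdm1def
  set cm2 : ℂ := ∫ t in Set.Iic x₀,
    Complex.exp (-(Complex.I * k) * t) / (2 * Complex.I * k) * (q t * fmmk t) with hcm2def
  set dm2 : ℂ := ∫ t in Set.Iic x₀,
    Complex.exp ((Complex.I * k) * t) / (2 * Complex.I * k) * (q t * fmmk t) with hdm2def
  set cp : ℂ := ∫ t in Set.Ici x₀,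
    Complex.exp (-(Complex.I * k) * t) / (2 * Complex.I * k) * (q t * fpk t) with hcpdef
  set dp : ℂ := ∫ t in Set.Ici x₀,
    Complex.exp ((Complex.I * k) * t) / (2 * Complex.I * k) * (q t * fpk t) with hdpdef
  -- smallness of the four left coefficients
  have hcm1s : ‖cm1‖ ≤ 1/4 :=
    tail_small k B hk hB q fmk hqInt hw₁ hfmkB _ hn1 _ measurableSet_Iic hx₀
  have hdm1s : ‖dm1‖ ≤ 1/4 :=
    tail_small k B hk hB q fmk hqInt hw₁ hfmkB _ hn2 _ measurableSet_Iic hx₀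
  have hcm2s : ‖cm2‖ ≤ 1/4 :=
    tail_small k B hk hB q fmmk hqInt hw₂ hfmmkB _ hn1 _ measurableSet_Iic hx₀
  have hdm2s : ‖dm2‖ ≤ 1/4 :=
    tail_small k B hk hB q fmmk hqInt hw₂ hfmmkB _ hn2 _ measurableSet_Iic hx₀
  -- representations
  have hrep1 : ∀ x : ℝ, fmk x = cm1 * Complex.exp (Complex.I * k * x)
      + (1 - dm1) * Complex.exp (-(Complex.I * k * x))
      + ∫ t in x₀..x, ((Real.sin (k * (x - t)) / k : ℝ) : ℂ) * q t * fmk t := by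
    intro x
    have hsplit : (∫ t in Set.Iic x, ((Real.sin (k * (x - t)) / k : ℝ) : ℂ) * q t * fmk t)
        = (∫ t in Set.Iic x₀, ((Real.sin (k * (x - t)) / k : ℝ) : ℂ) * q t * fmk t)
        + ∫ t in x₀..x, ((Real.sin (k * (x - t)) / k : ℝ) : ℂ) * q t * fmk t := by
      have h := intervalIntegral.integral_Iic_sub_Iic ((hF₁ x).integrableOn)
        ((hF₁ x).integrableOn) (a := x₀) (b := x)
      linear_combination h
    have hassoc : (∫ t in Set.Iic x₀, ((Real.sin (k * (x - t)) / k : ℝ) : ℂ) * q t * fmk t)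
        = ∫ t in Set.Iic x₀, ((Real.sin (k * (x - t)) / k : ℝ) : ℂ) * (q t * fmk t) :=
      setIntegral_congr_fun measurableSet_Iic fun t _ => mul_assoc _ _ _
    rw [hfmkeq x, hsplit, hassoc, tail_decomp k hk _ hw₁ _ measurableSet_Iic x, ← hcm1def,
      ← hdm1def]
    ring
  have hrep2 : ∀ x : ℝ, fmmk x = (1 + cm2) * Complex.exp (Complex.I * k * x)
      + (-dm2) * Complex.exp (-(Complex.I * k * x))
      + ∫ t in x₀..x, ((Real.sin (k * (x - t)) / k : ℝ) : ℂ) * q t * fmmk t := by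
    intro x
    have hsplit : (∫ t in Set.Iic x, ((Real.sin (k * (x - t)) / k : ℝ) : ℂ) * q t * fmmk t)
        = (∫ t in Set.Iic x₀, ((Real.sin (k * (x - t)) / k : ℝ) : ℂ) * q t * fmmk t)
        + ∫ t in x₀..x, ((Real.sin (k * (x - t)) / k : ℝ) : ℂ) * q t * fmmk t := by
      have h := intervalIntegral.integral_Iic_sub_Iic ((hF₂ x).integrableOn)
        ((hF₂ x).integrableOn) (a := x₀) (b := x)
      linear_combination h
    have hassoc : (∫ t in Set.Iic x₀, ((Real.sin (k * (x - t)) / k : ℝ) : ℂ) * q t * fmmk t)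
        = ∫ t in Set.Iic x₀, ((Real.sin (k * (x - t)) / k : ℝ) : ℂ) * (q t * fmmk t) :=
      setIntegral_congr_fun measurableSet_Iic fun t _ => mul_assoc _ _ _
    rw [hfmmkeq' x, hsplit, hassoc, tail_decomp k hk _ hw₂ _ measurableSet_Iic x, ← hcm2def,
      ← hdm2def]
    ring
  have hrep3 : ∀ x : ℝ, fpk x = (1 - cp) * Complex.exp (Complex.I * k * x)
      + dp * Complex.exp (-(Complex.I * k * x))
      + ∫ t in x₀..x, ((Real.sin (k * (x - t)) / k : ℝ) : ℂ) * q t * fpk t := by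
    intro x
    have hsplit : (∫ t in Set.Ici x, ((Real.sin (k * (x - t)) / k : ℝ) : ℂ) * q t * fpk t)
        = (∫ t in Set.Ici x₀, ((Real.sin (k * (x - t)) / k : ℝ) : ℂ) * q t * fpk t)
        - ∫ t in x₀..x, ((Real.sin (k * (x - t)) / k : ℝ) : ℂ) * q t * fpk t := by
      have e1 := intervalIntegral.integral_Iic_add_Ioi (b := x) ((hF₃ x).integrableOn) ((hF₃ x).integrableOn)
      have e2 := intervalIntegral.integral_Iic_add_Ioi (b := x₀) ((hF₃ x).integrableOn) ((hF₃ x).integrableOn)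
      have e3 := intervalIntegral.integral_Iic_sub_Iic ((hF₃ x).integrableOn)
        ((hF₃ x).integrableOn) (a := x₀) (b := x)
      have e4 : (∫ t in Set.Ici x, ((Real.sin (k * (x - t)) / k : ℝ) : ℂ) * q t * fpk t)
          = ∫ t in Set.Ioi x, ((Real.sin (k * (x - t)) / k : ℝ) : ℂ) * q t * fpk t :=
        integral_Ici_eq_integral_Ioi
      have e5 : (∫ t in Set.Ici x₀, ((Real.sin (k * (x - t)) / k : ℝ) : ℂ) * q t * fpk t)
          = ∫ t in Set.Ioi x₀, ((Real.sin (k * (x - t)) / k : ℝ) : ℂ) * q t * fpk t :=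
        integral_Ici_eq_integral_Ioi
      linear_combination e1 - e2 - e3 + e4 - e5
    have hassoc : (∫ t in Set.Ici x₀, ((Real.sin (k * (x - t)) / k : ℝ) : ℂ) * q t * fpk t)
        = ∫ t in Set.Ici x₀, ((Real.sin (k * (x - t)) / k : ℝ) : ℂ) * (q t * fpk t) :=
      setIntegral_congr_fun measurableSet_Ici fun t _ => mul_assoc _ _ _
    rw [hfpkeq x, hsplit, hassoc, tail_decomp k hk _ hw₃ _ measurableSet_Ici x, ← hcpdef,
      ← hdpdef]
    ring
  -- the determinant
  set det : ℂ := cm1 * (-dm2) - (1 + cm2) * (1 - dm1) with hdetdef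
  have hdet : det ≠ 0 := by
    intro h0
    have h1 : det + 1 = dm1 - cm2 + cm2 * dm1 - cm1 * dm2 := by rw [hdetdef]; ring
    have h2 : ‖det + 1‖ ≤ 5/8 := by
      rw [h1]
      calc ‖dm1 - cm2 + cm2 * dm1 - cm1 * dm2‖
          ≤ ‖dm1 - cm2 + cm2 * dm1‖ + ‖cm1 * dm2‖ := norm_sub_le _ _
        _ ≤ ‖dm1 - cm2‖ + ‖cm2 * dm1‖ + ‖cm1 * dm2‖ := by
            gcongr
            exact norm_add_le _ _
        _ ≤ (‖dm1‖ + ‖cm2‖) + ‖cm2‖ * ‖dm1‖ + ‖cm1‖ * ‖dm2‖ := by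
            gcongr <;> first
              | exact norm_sub_le _ _
              | exact le_of_eq (norm_mul _ _)
        _ ≤ (1/4 + 1/4) + (1/4) * (1/4) + (1/4) * (1/4) := by
            gcongr <;> first | exact norm_nonneg _ | assumption
        _ ≤ 5/8 := by norm_num
    rw [h0] at h2
    norm_num at h2
  -- the coefficients
  set d1 : ℂ := ((1 - cp) * (-dm2) - (1 + cm2) * dp) / det with hd1def
  set d2 : ℂ := (cm1 * dp - (1 - cp) * (1 - dm1)) / det with hd2def
  have hA : d1 * cm1 + d2 * (1 + cm2) = 1 - cp := by
    rw [hd1def, hd2def, div_mul_eq_mul_div, div_mul_eq_mul_div, ← add_div,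
      div_eq_iff hdet, hdetdef]
    ring
  have hB2 : d1 * (1 - dm1) + d2 * (-dm2) = dp := by
    rw [hd1def, hd2def, div_mul_eq_mul_div, div_mul_eq_mul_div, ← add_div,
      div_eq_iff hdet, hdetdef]
    ring
  -- the existence part
  set g : ℝ → ℂ := fun x => fpk x - (d1 * fmk x + d2 * fmmk x) with hgdef
  have hgcont : Continuous g :=
    hfpk.sub ((continuous_const.mul hfmk).add (continuous_const.mul hfmmk))
  have hgeq : ∀ x : ℝ, g x = ∫ t in x₀..x, ((Real.sin (k * (x - t)) / k : ℝ) : ℂ) * q t * g t := by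
    intro x
    have hint : ∀ (u : ℝ → ℂ), Continuous u → IntervalIntegrable
        (fun t => ((Real.sin (k * (x - t)) / k : ℝ) : ℂ) * q t * u t) volume x₀ x :=
      fun u hu => (((hSkc x).mul hq).mul hu).intervalIntegrable _ _
    have hV : (∫ t in x₀..x, ((Real.sin (k * (x - t)) / k : ℝ) : ℂ) * q t * g t)
        = (∫ t in x₀..x, ((Real.sin (k * (x - t)) / k : ℝ) : ℂ) * q t * fpk t)
          - (d1 * ∫ t in x₀..x, ((Real.sin (k * (x - t)) / k : ℝ) : ℂ) * q t * fmk t)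
          - (d2 * ∫ t in x₀..x, ((Real.sin (k * (x - t)) / k : ℝ) : ℂ) * q t * fmmk t) := by
      rw [← intervalIntegral.integral_const_mul, ← intervalIntegral.integral_const_mul,
        ← intervalIntegral.integral_sub (hint fpk hfpk) ((hint fmk hfmk).const_mul d1),
        ← intervalIntegral.integral_sub (((hint fpk hfpk).sub ((hint fmk hfmk).const_mul d1)))
          ((hint fmmk hfmmk).const_mul d2)]
      refine intervalIntegral.integral_congr fun t _ => ?_
      rw [hgdef]
      ring
    rw [hgdef]
    simp only []
    rw [hrep1 x, hrep2 x, hrep3 x, hV]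
    linear_combination (-(Complex.exp (Complex.I * k * x))) * hA
      + (-(Complex.exp (-(Complex.I * k * x)))) * hB2
  have hg0 : ∀ x, g x = 0 := volterra_unique k hk q g hq hgcont x₀ hgeq
  have hex : ∀ x : ℝ, fpk x = d1 * fmk x + d2 * fmmk x := by
    intro x
    have := hg0 x
    rw [hgdef] at this
    linear_combination this
  refine ⟨(d1, d2), hex, ?_⟩
  rintro ⟨e1, e2⟩ he
  have he' : ∀ x : ℝ, fpk x = e1 * fmk x + e2 * fmmk x := he
  have hcomb : ∀ x : ℝ, (e1 - d1) * fmk x + (e2 - d2) * fmmk x = 0 := by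
    intro x
    have h1 := he' x
    have h2 := hex x
    linear_combination h2 - h1
  have hVz : ∀ x : ℝ, (e1 - d1) * (∫ t in x₀..x, ((Real.sin (k * (x - t)) / k : ℝ) : ℂ) * q t * fmk t)
      + (e2 - d2) * (∫ t in x₀..x, ((Real.sin (k * (x - t)) / k : ℝ) : ℂ) * q t * fmmk t) = 0 := by
    intro x
    have hint : ∀ (u : ℝ → ℂ), Continuous u → IntervalIntegrable
        (fun t => ((Real.sin (k * (x - t)) / k : ℝ) : ℂ) * q t * u t) volume x₀ x :=
      fun u hu => (((hSkc x).mul hq).mul hu).intervalIntegrable _ _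
    rw [← intervalIntegral.integral_const_mul, ← intervalIntegral.integral_const_mul,
      ← intervalIntegral.integral_add ((hint fmk hfmk).const_mul _) ((hint fmmk hfmmk).const_mul _)]
    have : (∫ t in x₀..x, ((e1 - d1) * (((Real.sin (k * (x - t)) / k : ℝ) : ℂ) * q t * fmk t)
        + (e2 - d2) * (((Real.sin (k * (x - t)) / k : ℝ) : ℂ) * q t * fmmk t)))
        = ∫ t in x₀..x, (0:ℂ) := by
      refine intervalIntegral.integral_congr fun t _ => ?_
      linear_combination (((Real.sin (k * (x - t)) / k : ℝ) : ℂ) * q t) * hcomb t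
    rw [this]
    simp
  have hαβ : ∀ x : ℝ, ((e1 - d1) * cm1 + (e2 - d2) * (1 + cm2)) * Complex.exp (Complex.I * k * x)
      + ((e1 - d1) * (1 - dm1) + (e2 - d2) * (-dm2)) * Complex.exp (-(Complex.I * k * x)) = 0 := by
    intro x
    have h1 := hrep1 x
    have h2 := hrep2 x
    have hc := hcomb x
    have hv := hVz x
    linear_combination hc - (e1 - d1) * h1 - (e2 - d2) * h2 - hv
  obtain ⟨hα, hβ⟩ := exp_comb_zero k hk _ _ hαβ
  have he1 : (e1 - d1) * det = 0 := by
    rw [hdetdef]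
    linear_combination (-dm2) * hα - (1 + cm2) * hβ
  have he2 : (e2 - d2) * det = 0 := by
    rw [hdetdef]
    linear_combination cm1 * hβ - (1 - dm1) * hα
  have h1 : e1 = d1 := by
    rcases mul_eq_zero.1 he1 with h | h
    · linear_combination h
    · exact absurd h hdet
  have h2 : e2 = d2 := by
    rcases mul_eq_zero.1 he2 with h | h
    · linear_combination h
    · exact absurd h hdet
  simp [h1, h2]
end
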